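/- arXiv:2311.10515 — 8 statements merged into one kernel-verified Lean document; each statement's English description precedes it below -/
import Mathlib

section
/- Let k be a field of characteristic 0 with algebraic closure C, let A be a finite-dimensional commutative k-algebra, and let h ∈ A. Define the Hermite bilinear form associated with h by H_h(f,g) = trace of the k-linear multiplication map L_{fhg} : A → A. Then the rank of H_h equals the number of prime ideals of the localization of C ⊗_k A away from the element 1 ⊗ h (equivalently, the number of maximal ideals of C ⊗_k A not containing 1 ⊗ h). -/
open scoped TensorProduct

section Auxiliary

open Module LinearMap

section RankStability

variable {k C : Type*} [Field k] [Field C] [Algebra k C]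
variable {V W : Type*} [AddCommGroup V] [Module k V] [AddCommGroup W] [Module k W]
variable [FiniteDimensional k V] [FiniteDimensional k W]

lemma finrank_range_baseChange' (f : V →ₗ[k] W) :
    finrank C (LinearMap.range (f.baseChange C)) = finrank k (LinearMap.range f) := by
  set p := LinearMap.range f
  have hexact : Function.Exact (f.baseChange C) (p.mkQ.baseChange C) :=
    lTensor_exact C (LinearMap.exact_map_mkQ_range f) (Submodule.mkQ_surjective p)
  have hker : LinearMap.ker (p.mkQ.baseChange C) = LinearMap.range (f.baseChange C) :=
    hexact.linearMap_ker_eq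
  have hsurj : Function.Surjective (p.mkQ.baseChange C) :=
    LinearMap.lTensor_surjective C (Submodule.mkQ_surjective p)
  have h1 := LinearMap.finrank_range_add_finrank_ker (p.mkQ.baseChange C)
  rw [LinearMap.range_eq_top.mpr hsurj, finrank_top, hker] at h1
  have h2 : finrank C (C ⊗[k] W) = finrank k W := Module.finrank_baseChange
  have h3 : finrank C (C ⊗[k] (W ⧸ p)) = finrank k (W ⧸ p) := Module.finrank_baseChange
  have h4 := Submodule.finrank_quotient_add_finrank p
  omega

end RankStability


lemma Matrix.rank_map_algebraMap' {k C : Type*} [Field k] [Field C] [Algebra k C]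
    {n : ℕ} (M : Matrix (Fin n) (Fin n) k) :
    (M.map (algebraMap k C)).rank = M.rank := by
  classical
  let pb := Pi.basisFun k (Fin n)
  let f := Matrix.toLin pb pb M
  have h1 : M.rank = finrank k (LinearMap.range f) := Matrix.rank_eq_finrank_range_toLin M pb pb
  have hM : M.map (algebraMap k C) =
      LinearMap.toMatrix (pb.baseChange C) (pb.baseChange C) (f.baseChange C) := by
    ext i j
    rw [LinearMap.toMatrix_apply, Basis.baseChange_apply, LinearMap.baseChange_tmul,
      Basis.baseChange_repr_tmul]
    simp only [Matrix.map_apply, Algebra.algebraMap_eq_smul_one, f, pb]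
    congr 1
    rw [Matrix.toLin_self]
    simp [Pi.basisFun_repr, Pi.basisFun_apply, Pi.single_apply, map_sum]
  have h2 : (M.map (algebraMap k C)).rank = finrank C (LinearMap.range (f.baseChange C)) := by
    rw [hM]
    rw [Matrix.rank_eq_finrank_range_toLin _ (pb.baseChange C) (pb.baseChange C),
      Matrix.toLin_toMatrix]
  rw [h1, h2, finrank_range_baseChange']


section Main
variable {K B : Type*} [Field K] [IsAlgClosed K] [CharZero K]
  [CommRing B] [Algebra K B] [FiniteDimensional K B]

lemma hermite_main (x : B) :
    finrank K (LinearMap.range ((Algebra.traceForm K B).compl₂ (LinearMap.mulLeft K x)))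
      = Nat.card {p : PrimeSpectrum B // x ∉ p.asIdeal} := by
  classical
  letI : IsArtinianRing B := isArtinian_of_tower K inferInstance
  haveI : Finite {I : Ideal B | I.IsMaximal} := (IsArtinianRing.setOfPred_isMaximal_finite B).to_subtype
  letI : Fintype {I : Ideal B | I.IsMaximal} := Fintype.ofFinite _
  set MS := {I : Ideal B | I.IsMaximal} with hMS
  -- algebra homs to K
  have hbij : ∀ I : MS, Function.Bijective (algebraMap K (B ⧸ I.1)) := by
    intro I
    haveI : I.1.IsMaximal := I.2
    letI : Field (B ⧸ I.1) := Ideal.Quotient.field I.1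
    haveI : Module.Finite K (B ⧸ I.1) :=
      Module.Finite.of_surjective (Ideal.Quotient.mkₐ K I.1).toLinearMap
        Ideal.Quotient.mk_surjective
    exact ⟨RingHom.injective _, IsAlgClosed.algebraMap_bijective_of_isIntegral.2⟩
  let ψ : ∀ I : MS, K ≃ₐ[K] (B ⧸ I.1) := fun I =>
    AlgEquiv.ofBijective (Algebra.ofId K (B ⧸ I.1)) (hbij I)
  let φ : ∀ I : MS, B →ₐ[K] K := fun I =>
    ((ψ I).symm.toAlgHom.comp (Ideal.Quotient.mkₐ K I.1))
  have hφmk : ∀ (I : MS) (z : B), ψ I (φ I z) = Ideal.Quotient.mk I.1 z := by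
    intro I z
    simp [φ, ψ]
  have hφmem : ∀ (I : MS) (z : B), φ I z = 0 ↔ z ∈ I.1 := by
    intro I z
    rw [← Ideal.Quotient.eq_zero_iff_mem, ← hφmk I z]
    constructor
    · intro h; rw [h, map_zero]
    · intro h
      exact (ψ I).injective (by rw [h, map_zero])
  have hφsub : ∀ (I : MS) (z : B), z - algebraMap K B (φ I z) ∈ I.1 := by
    intro I z
    rw [← hφmem I]
    simp [map_sub, AlgHom.commutes]
  have hnil : ∀ z : B, (∀ I : MS, z ∈ I.1) → IsNilpotent z := by
    intro z hz
    rw [nilpotent_iff_mem_prime]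
    intro J hJ
    exact hz ⟨J, (IsArtinianRing.isPrime_iff_isMaximal J).mp hJ⟩
  set π : B →+* ∀ I : MS, B ⧸ I.1 := Pi.ringHom fun I => Ideal.Quotient.mk I.1 with hπ
  have hπker : ∀ z ∈ RingHom.ker π, IsNilpotent z := by
    intro z hz
    refine hnil z fun I => ?_
    rw [RingHom.mem_ker] at hz
    exact Ideal.Quotient.eq_zero_iff_mem.mp (congrFun hz I)
  have hπsurj : Function.Surjective π := by
    have hcop : Pairwise (Function.onFun IsCoprime fun I : MS => I.1) := fun I J hIJ =>
      Ideal.isCoprime_iff_sup_eq.mpr (Ideal.IsMaximal.coprime_of_ne I.2 J.2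
        (fun e => hIJ (Subtype.ext e)))
    intro y
    obtain ⟨x', hx'⟩ := Ideal.quotientInfToPiQuotient_surj hcop y
    obtain ⟨z, rfl⟩ := Ideal.Quotient.mk_surjective x'
    exact ⟨z, by ext I; exact congrFun hx' I⟩
  obtain ⟨e, he, hπe⟩ := CompleteOrthogonalIdempotents.lift_of_isNilpotent_ker π hπker
    (CompleteOrthogonalIdempotents.single (fun I : MS => B ⧸ I.1)) (fun I => hπsurj _)
  have hmke : ∀ I J : MS, Ideal.Quotient.mk I.1 (e J) = (Pi.single (M := fun I : MS => B ⧸ I.1) J 1) I := by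
    intro I J
    exact congrFun (congrFun hπe J) I
  have hφe : ∀ I J : MS, φ I (e J) = if I = J then 1 else 0 := by
    intro I J
    apply (ψ I).injective
    rw [hφmk]
    rcases eq_or_ne I J with rfl | hIJ
    · simp [hmke I I]
    · rw [hmke I J, Pi.single_eq_of_ne hIJ]
      simp [hIJ]
  set d : MS → ℕ := fun I => finrank K (LinearMap.range (LinearMap.mulLeft K (e I))) with hd
  have htr_e : ∀ I : MS, Algebra.trace K B (e I) = (d I : K) := by
    intro I
    have hproj : LinearMap.IsProj (LinearMap.range (LinearMap.mulLeft K (e I)))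
        (LinearMap.mulLeft K (e I)) := by
      constructor
      · intro y; exact LinearMap.mem_range_self _ y
      · rintro _ ⟨y, rfl⟩
        simp only [LinearMap.mulLeft_apply]
        rw [← mul_assoc, (he.idem I)]
    rw [Algebra.trace_apply]
    have heq : Algebra.lmul K B (e I) = LinearMap.mulLeft K (e I) := rfl
    rw [heq, hproj.trace]
  have htr : ∀ z : B, Algebra.trace K B z = ∑ I : MS, (d I : K) * φ I z := by
    intro z
    have h1 : z = ∑ I : MS, z * e I := by
      rw [← Finset.mul_sum, he.complete, mul_one]
    conv_lhs => rw [h1]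
    rw [map_sum]
    refine Finset.sum_congr rfl fun I _ => ?_
    have hsplit : z * e I = (φ I z) • e I + (z - algebraMap K B (φ I z)) * e I := by
      rw [Algebra.smul_def]; ring
    have hn : Algebra.trace K B ((z - algebraMap K B (φ I z)) * e I) = 0 := by
      have hnl : IsNilpotent ((z - algebraMap K B (φ I z)) * e I) := by
        refine hnil _ fun J => ?_
        rcases eq_or_ne J I with rfl | hJI
        · exact Ideal.mul_mem_right _ _ (hφsub J z)
        · refine Ideal.mul_mem_left _ _ ?_
          rw [← Ideal.Quotient.eq_zero_iff_mem, hmke J I, Pi.single_eq_of_ne hJI]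
      exact (Algebra.isNilpotent_trace_of_isNilpotent hnl).eq_zero
    rw [hsplit, map_add, map_smul, htr_e I, smul_eq_mul, hn, add_zero, mul_comm]
  set T := (Algebra.traceForm K B).compl₂ (LinearMap.mulLeft K x) with hTdef
  have hT : ∀ f g : B, T f g = ∑ I : MS, (d I : K) * (φ I f * (φ I x * φ I g)) := by
    intro f g
    rw [hTdef]
    simp only [LinearMap.compl₂_apply, Algebra.traceForm_apply, LinearMap.mulLeft_apply]
    rw [htr]
    exact Finset.sum_congr rfl fun I _ => by rw [map_mul, map_mul]
  set Φ : MS → Module.Dual K B := fun I => (φ I).toLinearMap with hΦ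
  have hTf : ∀ f : B, T f = ∑ I : MS, ((d I : K) * (φ I f * φ I x)) • Φ I := by
    intro f
    ext g
    rw [hT f g, LinearMap.sum_apply]
    refine Finset.sum_congr rfl fun I _ => ?_
    rw [LinearMap.smul_apply]
    simp only [Φ, AlgHom.toLinearMap_apply, smul_eq_mul]
    ring
  have hd0 : ∀ I : MS, (d I : K) ≠ 0 := by
    intro I
    have he0 : e I ≠ 0 := by
      intro h0
      have h1 := hφe I I
      rw [h0, map_zero, if_pos rfl] at h1
      exact zero_ne_one h1
    have hmem : e I ∈ LinearMap.range (LinearMap.mulLeft K (e I)) := ⟨1, mul_one _⟩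
    have hdz : d I ≠ 0 := by
      intro hz
      have hbot : LinearMap.range (LinearMap.mulLeft K (e I)) = ⊥ :=
        Submodule.finrank_eq_zero.mp hz
      rw [hbot] at hmem
      exact he0 (Submodule.mem_bot _ |>.mp hmem)
    exact_mod_cast hdz
  set S := {I : MS // φ I x ≠ 0} with hS
  have hrange : LinearMap.range T = Submodule.span K (Set.range fun I : S => Φ I.1) := by
    apply le_antisymm
    · rintro _ ⟨f, rfl⟩
      rw [hTf f]
      refine Submodule.sum_mem _ fun I _ => ?_
      by_cases hI : φ I x = 0
      · rw [hI, mul_zero, mul_zero, zero_smul]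
        exact Submodule.zero_mem _
      · exact Submodule.smul_mem _ _ (Submodule.subset_span ⟨⟨I, hI⟩, rfl⟩)
    · rw [Submodule.span_le]
      rintro _ ⟨⟨I, hI⟩, rfl⟩
      have hc : ((d I : K) * φ I x) ≠ 0 := mul_ne_zero (hd0 I) hI
      have hTe : T (e I) = ((d I : K) * φ I x) • Φ I := by
        ext g
        rw [hT]
        rw [Finset.sum_eq_single I]
        · rw [hφe I I, if_pos rfl]
          simp only [Φ, LinearMap.smul_apply, AlgHom.toLinearMap_apply, smul_eq_mul]
          ring
        · intro J _ hJ
          rw [hφe J I, if_neg hJ]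
          ring
        · intro hI'; exact absurd (Finset.mem_univ I) hI'
      refine ⟨((d I : K) * φ I x)⁻¹ • e I, ?_⟩
      rw [map_smul, hTe, smul_smul, inv_mul_cancel₀ hc, one_smul]
  have hinjφ : Function.Injective (fun I : S => (φ I.1 : B →* K)) := by
    intro I J hIJ
    have hfun : ∀ z, φ I.1 z = φ J.1 z := fun z =>
      congrArg (fun (f : B →* K) => f z) hIJ
    apply Subtype.ext; apply Subtype.ext
    ext z
    constructor
    · intro hz; exact (hφmem J.1 z).mp (by rw [← hfun z]; exact (hφmem I.1 z).mpr hz)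
    · intro hz; exact (hφmem I.1 z).mp (by rw [hfun z]; exact (hφmem J.1 z).mpr hz)
  have hli0 : LinearIndependent K (fun I : S => ((φ I.1 : B →* K) : B → K)) :=
    (linearIndependent_monoidHom B K).comp _ hinjφ
  have hli : LinearIndependent K (fun I : S => Φ I.1) := by
    let F : Module.Dual K B →ₗ[K] (B → K) :=
      { toFun := fun ℓ => ℓ, map_add' := fun _ _ => rfl, map_smul' := fun _ _ => rfl }
    have hcomp : F ∘ (fun I : S => Φ I.1) = fun I : S => ((φ I.1 : B →* K) : B → K) := rfl
    exact LinearIndependent.of_comp F (by rw [hcomp]; exact hli0)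
  have hcount : finrank K (LinearMap.range T) = Fintype.card S := by
    rw [hrange, finrank_span_eq_card hli]
  have hequiv : {p : PrimeSpectrum B // x ∉ p.asIdeal} ≃ S :=
    { toFun := fun p => ⟨⟨p.1.asIdeal, (IsArtinianRing.isPrime_iff_isMaximal _).mp p.1.2⟩,
        fun h0 => p.2 ((hφmem _ x).mp h0)⟩,
      invFun := fun I => ⟨⟨I.1.1, (I.1.2 : (I.1.1 : Ideal B).IsMaximal).isPrime⟩,
        fun hx => I.2 ((hφmem I.1 x).mpr hx)⟩,
      left_inv := fun p => rfl,
      right_inv := fun I => rfl }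
  rw [hcount, Nat.card_congr hequiv, Nat.card_eq_fintype_card]

end Main

end Auxiliary

section Final

open Module LinearMap

/-- **Multivariate Hermite quadratic form associated with an element, rank part.**
Let `k` be a field of characteristic 0 with algebraic closure `C`, `A` a finite-dimensional
commutative `k`-algebra and `h ∈ A`.  The Hermite bilinear form associated with `h`,
`H_h (f, g) = tr (L_{f h g})`, has rank equal to the number of prime ideals of the
localization of `C ⊗[k] A` away from `1 ⊗ h`. -/
theorem hermite_rank_assoc_eq_card_primeSpectrum_away
    (k : Type*) [Field k] [CharZero k]
    (A : Type*) [CommRing A] [Algebra k A] [FiniteDimensional k A] (h : A) :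
    Module.finrank k
        (LinearMap.range ((Algebra.traceForm k A).compl₂ (LinearMap.mulLeft k h))) =
      Nat.card (PrimeSpectrum
        (Localization.Away ((1 : AlgebraicClosure k) ⊗ₜ[k] h))) := by
  classical
  set C := AlgebraicClosure k
  haveI : CharZero C := charZero_of_injective_algebraMap (algebraMap k C).injective
  set B := C ⊗[k] A with hB
  set xb : B := (1 : C) ⊗ₜ[k] h with hxb
  -- Step 1: count primes of the localization
  have hcard : Nat.card (PrimeSpectrum (Localization.Away xb)) =
      Nat.card {p : PrimeSpectrum B // xb ∉ p.asIdeal} := by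
    have hinj : Function.Injective
        (PrimeSpectrum.comap (algebraMap B (Localization.Away xb))) :=
      PrimeSpectrum.localization_comap_injective (Localization.Away xb) (Submonoid.powers xb)
    refine Nat.card_congr ((Equiv.ofInjective _ hinj).trans (Equiv.setCongr ?_))
    rw [PrimeSpectrum.localization_away_comap_range (Localization.Away xb) xb]
    ext p
    exact PrimeSpectrum.mem_basicOpen xb p
  -- Step 2: trace of `1 ⊗ a`
  have htmul : ∀ a : A, Algebra.trace C B ((1 : C) ⊗ₜ[k] a)
      = algebraMap k C (Algebra.trace k A a) := by
    intro a
    have hl : Algebra.lmul C B ((1:C) ⊗ₜ[k] a) = (Algebra.lmul k A a).baseChange C := by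
      apply LinearMap.ext
      intro z
      induction z using TensorProduct.induction_on with
      | zero => simp
      | tmul c y =>
          rw [LinearMap.baseChange_tmul]
          show (1 ⊗ₜ[k] a) * (c ⊗ₜ[k] y) = c ⊗ₜ[k] (a * y)
          rw [Algebra.TensorProduct.tmul_mul_tmul, one_mul]
      | add u v hu hv => simp only [map_add, hu, hv]
    rw [Algebra.trace_apply, Algebra.trace_apply, hl, LinearMap.trace_baseChange]
  -- Step 3: matrices
  set b := Module.finBasis k A with hb
  set b' := b.baseChange C with hb'
  set T_A := (Algebra.traceForm k A).compl₂ (LinearMap.mulLeft k h) with hTA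
  set T_B := (Algebra.traceForm C B).compl₂ (LinearMap.mulLeft C xb) with hTB
  set MA := LinearMap.toMatrix b b.dualBasis T_A with hMA
  have h1 : MA.rank = finrank k (LinearMap.range T_A) := by
    rw [Matrix.rank_eq_finrank_range_toLin MA b.dualBasis b, hMA, Matrix.toLin_toMatrix]
  set MB := LinearMap.toMatrix b' b'.dualBasis T_B with hMBdef
  have h2 : MB.rank = finrank C (LinearMap.range T_B) := by
    rw [Matrix.rank_eq_finrank_range_toLin MB b'.dualBasis b', hMBdef, Matrix.toLin_toMatrix]
  have hMB : MB = MA.map (algebraMap k C) := by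
    ext i j
    rw [Matrix.map_apply, hMBdef, hMA, LinearMap.toMatrix_apply, LinearMap.toMatrix_apply,
      Basis.dualBasis_repr, Basis.dualBasis_repr, hTA, hTB]
    simp only [LinearMap.compl₂_apply, Algebra.traceForm_apply, LinearMap.mulLeft_apply]
    rw [hb', Basis.baseChange_apply, Basis.baseChange_apply, hxb,
      Algebra.TensorProduct.tmul_mul_tmul, Algebra.TensorProduct.tmul_mul_tmul,
      one_mul, one_mul, htmul]
  haveI : FiniteDimensional C B := inferInstance
  rw [← h1, ← Matrix.rank_map_algebraMap' (C := C) MA, ← hMB, h2, hTB, hermite_main xb, ← hcard]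


end Final
end

section
/- Let k be a field of characteristic 0, let S and S' be commutative k-algebras of finite type, and let S → S' be a k-algebra homomorphism. Let p be a prime ideal of S and let κ(p) denote its residue field, i.e. the fraction field of S/p. Assume the fiber algebra F = κ(p) ⊗_S S' is finite-dimensional over κ(p). Then the rank of the κ(p)-bilinear trace form on F, (f,g) ↦ tr(L_{fg}), equals the number of prime ideals of K ⊗_{κ(p)} F, where K is an algebraic closure of κ(p) (i.e. the cardinality of the geometric fiber of Spec S' → Spec S over p). Moreover, for any h ∈ S' with image h̄ in F, the rank of the κ(p)-bilinear form (f,g) ↦ tr(L_{f h̄ g}) on F equals the number of prime ideals of the localization of K ⊗_{κ(p)} F away from the image of h. -/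
open scoped TensorProduct
open LinearMap Module

theorem card_primeSpectrum_away {A : Type*} [CommRing A] (a : A) :
    Nat.card (PrimeSpectrum (Localization.Away a)) =
      Nat.card {p : PrimeSpectrum A // a ∉ p.asIdeal} := by
  apply Nat.card_congr
  have hinj : Function.Injective
      (PrimeSpectrum.comap (algebraMap A (Localization.Away a))) :=
    PrimeSpectrum.localization_comap_injective _ (Submonoid.powers a)
  refine (Equiv.ofInjective _ hinj).trans ?_
  refine (Equiv.setCongr
    (PrimeSpectrum.localization_away_comap_range (Localization.Away a) a)).trans ?_
  exact Equiv.subtypeEquivRight fun p => by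
    simp [PrimeSpectrum.basicOpen]
    rfl


noncomputable def resEquiv (K : Type*) [Field K] [IsAlgClosed K]
    (A : Type*) [CommRing A] [Algebra K A] [FiniteDimensional K A]
    (J : Ideal A) (hJ : J.IsMaximal) : (A ⧸ J) ≃ₐ[K] K := by
  letI := hJ
  letI : Field (A ⧸ J) := Ideal.Quotient.field J
  haveI : Module.Finite K (A ⧸ J) :=
    Module.Finite.of_surjective (Ideal.Quotient.mkₐ K J).toLinearMap
      Ideal.Quotient.mk_surjective
  have hbij : Function.Bijective (Algebra.ofId K (A ⧸ J)) := by
    have h1 : Function.Injective (algebraMap K (A ⧸ J)) := (algebraMap K (A ⧸ J)).injective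
    have h2 : Function.Surjective (algebraMap K (A ⧸ J)) :=
      IsAlgClosed.algebraMap_bijective_of_isIntegral.2
    exact ⟨h1, h2⟩
  exact (AlgEquiv.ofBijective (Algebra.ofId K (A ⧸ J)) hbij).symm

set_option synthInstance.maxHeartbeats 1000000 in
set_option maxHeartbeats 2000000 in
theorem hermite_alg_closed (K : Type*) [Field K] [IsAlgClosed K] [CharZero K]
    (A : Type*) [CommRing A] [Algebra K A] [FiniteDimensional K A] (a : A) :
    finrank K (LinearMap.range ((Algebra.traceForm K A).compl₂ (LinearMap.mulLeft K a))) =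
      Nat.card {p : PrimeSpectrum A // a ∉ p.asIdeal} := by
  classical
  haveI : IsArtinianRing A := isArtinian_of_tower K inferInstance
  haveI : Finite {I : Ideal A | I.IsMaximal} :=
    (IsArtinianRing.setOfPred_isMaximal_finite A).to_subtype
  haveI : Fintype {I : Ideal A | I.IsMaximal} := Fintype.ofFinite _
  set ι := {I : Ideal A | I.IsMaximal} with hι
  let e : ∀ I : ι, (A ⧸ (I : Ideal A)) ≃ₐ[K] K := fun I => resEquiv K A I.1 I.2
  let ψ : A →ₐ[K] (ι → K) :=
    Pi.algHom K _ fun I => (e I).toAlgHom.comp (Ideal.Quotient.mkₐ K I.1)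
  have hψ_apply : ∀ (x : A) (I : ι), ψ x I = e I (Ideal.Quotient.mk I.1 x) := fun x I => rfl
  -- kernel consists of nilpotents
  have hker : ∀ x : A, ψ x = 0 → IsNilpotent x := by
    intro x hx
    rw [nilpotent_iff_mem_prime]
    intro J hJ
    haveI := hJ
    haveI hJm : J.IsMaximal := IsArtinianRing.isMaximal_of_isPrime J
    have h0 : ψ x ⟨J, hJm⟩ = 0 := by rw [hx]; rfl
    rw [hψ_apply] at h0
    have hz : Ideal.Quotient.mk J x = 0 := by
      apply (e ⟨J, hJm⟩).injective
      simpa using h0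
    exact Ideal.Quotient.eq_zero_iff_mem.mp hz
  -- surjectivity via CRT
  have hsurj : Function.Surjective ψ := by
    intro v
    obtain ⟨r, hr⟩ := Ideal.pi_quotient_surjective (I := fun I : ι => I.1)
      (fun I J hIJ => Ideal.isCoprime_iff_sup_eq.mpr
        (I.2.coprime_of_ne J.2 fun h => hIJ (Subtype.ext h)))
      (fun I => (e I).symm (v I))
    exact ⟨r, funext fun I => by rw [hψ_apply, hr I, AlgEquiv.apply_symm_apply]⟩
  -- idempotent lifts
  have hlift : ∀ I : ι, ∃ c : A, IsIdempotentElem c ∧ ψ c = Pi.single I 1 := by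
    intro I
    have hid : IsIdempotentElem (Pi.single I (1 : K) : ι → K) := by
      show _ * _ = _
      ext J
      by_cases h : J = I <;> simp [Pi.single_apply, h]
    obtain ⟨x, hx⟩ := hsurj (Pi.single I 1)
    obtain ⟨c, hc, hc'⟩ := exists_isIdempotentElem_eq_of_ker_isNilpotent
      (ψ : A →+* (ι → K)) (fun x hx => hker x hx) (Pi.single I 1) ⟨x, hx⟩ hid
    exact ⟨c, hc, hc'⟩
  choose c hc hcψ using hlift
  have hc0 : ∀ I, c I ≠ 0 := by
    intro I h
    have h1 := congrFun (hcψ I) I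
    rw [h, map_zero] at h1
    simp at h1
  -- trace of the idempotents is a positive natural number
  have htr : ∀ I, Algebra.trace K A (c I) =
      (finrank K (LinearMap.range ((Algebra.lmul K A) (c I))) : K) := by
    intro I
    rw [Algebra.trace_apply]
    have hproj : LinearMap.IsProj (LinearMap.range ((Algebra.lmul K A) (c I)))
        ((Algebra.lmul K A) (c I)) := by
      constructor
      · intro x; exact ⟨x, rfl⟩
      · rintro x ⟨y, rfl⟩
        show c I * (c I * y) = c I * y
        rw [← mul_assoc, (hc I).eq]
    exact hproj.trace
  have ht : ∀ I, Algebra.trace K A (c I) ≠ 0 := by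
    intro I
    rw [htr I, Nat.cast_ne_zero]
    intro h0
    rw [Submodule.finrank_eq_zero] at h0
    apply hc0 I
    have hmem : c I ∈ LinearMap.range ((Algebra.lmul K A) (c I)) :=
      ⟨1, by simp [Algebra.coe_lmul_eq_mul]⟩
    rw [h0] at hmem
    simpa using hmem
  -- the trace formula
  have htrace : ∀ z : A, Algebra.trace K A z = ∑ I : ι, ψ z I * Algebra.trace K A (c I) := by
    intro z
    have hnil : IsNilpotent (z - ∑ I : ι, ψ z I • c I) := by
      apply hker
      rw [map_sub, map_sum]
      have h2 : ∑ I : ι, ψ (ψ z I • c I) = ψ z := by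
        rw [← Finset.univ_sum_single (ψ z)]
        refine Finset.sum_congr rfl fun I _ => ?_
        rw [map_smul, hcψ I]
        ext J
        by_cases h : J = I <;> simp [Pi.single_apply, h]
      rw [h2, sub_self]
    have h0 : Algebra.trace K A (z - ∑ I : ι, ψ z I • c I) = 0 := by
      rw [Algebra.trace_apply]
      have h1 : IsNilpotent ((Algebra.lmul K A) (z - ∑ I : ι, ψ z I • c I)) :=
        hnil.map (Algebra.lmul K A)
      exact (LinearMap.isNilpotent_trace_of_isNilpotent h1).eq_zero
    have hdec : z = (∑ I : ι, ψ z I • c I) + (z - ∑ I : ι, ψ z I • c I) := by ring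
    conv_lhs => rw [hdec]
    rw [map_add, h0, add_zero, map_sum]
    refine Finset.sum_congr rfl fun I _ => ?_
    rw [map_smul, smul_eq_mul]
  -- the diagonal coefficients
  set d : ι → K := fun I => Algebra.trace K A (c I) * ψ a I with hd
  set D : (ι → K) →ₗ[K] (ι → K) →ₗ[K] K :=
    (LinearEquiv.piRing K K ι K).symm.toLinearMap ∘ₗ (Matrix.diagonal d).mulVecLin with hD
  have hDapp : ∀ u v : ι → K, D u v = ∑ I : ι, v I * (d I * u I) := by
    intro u v
    rw [hD]
    simp only [LinearMap.coe_comp, Function.comp_apply, LinearEquiv.coe_coe,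
      Matrix.mulVecLin_apply, LinearEquiv.piRing_symm_apply, Matrix.mulVec_diagonal,
      smul_eq_mul]
  -- identification of the bilinear form
  have hform : (Algebra.traceForm K A).compl₂ (LinearMap.mulLeft K a) =
      LinearMap.compl₁₂ D ψ.toLinearMap ψ.toLinearMap := by
    ext x y
    rw [LinearMap.compl₂_apply, Algebra.traceForm_apply, LinearMap.compl₁₂_apply,
      LinearMap.mulLeft_apply, htrace (x * (a * y))]
    have hx : ∀ I : ι, ψ (x * (a * y)) I = ψ x I * (ψ a I * ψ y I) := by
      intro I; rw [map_mul, map_mul]; rfl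
    rw [hDapp]
    refine Finset.sum_congr rfl fun I _ => ?_
    rw [hx I, hd]
    show ψ x I * (ψ a I * ψ y I) * (Algebra.trace K A (c I)) =
      ψ y I * (Algebra.trace K A (c I) * ψ a I * ψ x I)
    ring
  have h1 : LinearMap.compl₁₂ D ψ.toLinearMap ψ.toLinearMap =
      (ψ.toLinearMap.dualMap ∘ₗ D) ∘ₗ ψ.toLinearMap := by
    ext x y; rfl
  have hrtop : LinearMap.range ψ.toLinearMap = ⊤ := LinearMap.range_eq_top.mpr hsurj
  have hdinj : Function.Injective ψ.toLinearMap.dualMap :=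
    LinearMap.dualMap_injective_of_surjective hsurj
  have step1 : finrank K (LinearMap.range ((Algebra.traceForm K A).compl₂
      (LinearMap.mulLeft K a))) = finrank K (LinearMap.range D) := by
    rw [hform, h1, LinearMap.range_comp, hrtop, Submodule.map_top, LinearMap.range_comp]
    exact (Submodule.equivMapOfInjective ψ.toLinearMap.dualMap hdinj
      (LinearMap.range D)).finrank_eq.symm
  have step2 : finrank K (LinearMap.range D) =
      finrank K (LinearMap.range (Matrix.diagonal d).mulVecLin) := by
    rw [hD, LinearMap.range_comp]
    exact LinearEquiv.finrank_map_eq _ _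
  have step3 : finrank K (LinearMap.range (Matrix.diagonal d).mulVecLin) =
      Fintype.card {I : ι // d I ≠ 0} := Matrix.rank_diagonal d
  rw [step1, step2, step3, ← Nat.card_eq_fintype_card]
  -- final counting
  apply Nat.card_congr
  refine Equiv.subtypeEquiv
    (⟨fun I : ι => (⟨I.1, I.2.isPrime⟩ : PrimeSpectrum A),
      fun q => ⟨q.asIdeal, IsArtinianRing.isMaximal_of_isPrime q.asIdeal⟩,
      fun I => rfl, fun q => rfl⟩ : ι ≃ PrimeSpectrum A) ?_
  intro I
  show d I ≠ 0 ↔ a ∉ I.1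
  rw [hd]
  rw [mul_ne_zero_iff, and_iff_right (ht I), hψ_apply]
  rw [ne_eq, map_eq_zero_iff _ (e I).injective, Ideal.Quotient.eq_zero_iff_mem]

set_option maxHeartbeats 4000000 in
set_option synthInstance.maxHeartbeats 1000000 in
theorem rank_form_baseChange (κ K F : Type*) [Field κ] [Field K] [Algebra κ K]
    [CommRing F] [Algebra κ F] [FiniteDimensional κ F] (a : F) :
    finrank κ (LinearMap.range ((Algebra.traceForm κ F).compl₂ (LinearMap.mulLeft κ a))) =
      finrank K (LinearMap.range ((Algebra.traceForm K (K ⊗[κ] F)).compl₂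
        (LinearMap.mulLeft K ((1 : K) ⊗ₜ[κ] a)))) := by
  classical
  set f := (Algebra.traceForm κ F).compl₂ (LinearMap.mulLeft κ a) with hf
  let b := Module.finBasis κ F
  let bb := Algebra.TensorProduct.basis K b
  let Φ : (K ⊗[κ] Module.Dual κ F) ≃ₗ[K] Module.Dual K (K ⊗[κ] F) :=
    (Algebra.TensorProduct.basis K b.dualBasis).equiv bb.dualBasis (Equiv.refl _)
  -- trace of 1 ⊗ w
  have htr : ∀ w : F, Algebra.trace K (K ⊗[κ] F) ((1 : K) ⊗ₜ[κ] w) =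
      algebraMap κ K (Algebra.trace κ F w) := by
    intro w
    have hl : (Algebra.lmul K (K ⊗[κ] F)) ((1 : K) ⊗ₜ[κ] w) =
        LinearMap.baseChange K ((Algebra.lmul κ F) w) := by
      apply (Algebra.TensorProduct.basis K b).ext
      intro i
      rw [Algebra.TensorProduct.basis_apply, LinearMap.baseChange_tmul]
      show ((1 : K) ⊗ₜ[κ] w) * ((1 : K) ⊗ₜ[κ] b i) = (1 : K) ⊗ₜ[κ] ((Algebra.lmul κ F) w (b i))
      rw [Algebra.TensorProduct.tmul_mul_tmul, one_mul]
      rfl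
    rw [Algebra.trace_apply, hl, LinearMap.trace_baseChange, Algebra.trace_apply]
  -- evaluation of Φ on simple tensors
  have hΦ : ∀ (g : Module.Dual κ F) (l : Fin (finrank κ F)),
      Φ.toLinearMap ((1 : K) ⊗ₜ[κ] g) (bb l) = algebraMap κ K (g (b l)) := by
    intro g l
    have hg : (1 : K) ⊗ₜ[κ] g
        = ∑ i, g (b i) • ((1 : K) ⊗ₜ[κ] (b.dualBasis i : Module.Dual κ F)) := by
      conv_lhs => rw [← b.dualBasis.sum_repr g]
      rw [TensorProduct.tmul_sum]
      refine Finset.sum_congr rfl fun i _ => ?_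
      rw [TensorProduct.tmul_smul, Basis.dualBasis_repr]
    rw [hg, map_sum, LinearMap.sum_apply]
    have hterm : ∀ i, (Φ.toLinearMap (g (b i) • ((1 : K) ⊗ₜ[κ] (b.dualBasis i : Module.Dual κ F)))) (bb l)
        = g (b i) • (bb.dualBasis i (bb l)) := by
      intro i
      have h2 : ((1 : K) ⊗ₜ[κ] (b.dualBasis i : Module.Dual κ F))
          = (Algebra.TensorProduct.basis K b.dualBasis) i :=
        (Algebra.TensorProduct.basis_apply _ _).symm
      have h4 : Φ.toLinearMap ((1 : K) ⊗ₜ[κ] (b.dualBasis i : Module.Dual κ F))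
          = bb.dualBasis i := by
        rw [h2, LinearEquiv.coe_coe]
        show Φ ((Algebra.TensorProduct.basis K b.dualBasis) i) = bb.dualBasis i
        rw [Basis.equiv_apply]
        rfl
      rw [map_smul_of_tower, h4, LinearMap.smul_apply]
    rw [Finset.sum_congr rfl fun i _ => hterm i]
    have h3 : ∀ i, g (b i) • (bb.dualBasis i (bb l)) =
        if l = i then g (b i) • (1 : K) else 0 := by
      intro i
      rw [bb.dualBasis_apply_self]
      split <;> simp
    rw [Finset.sum_congr rfl fun i _ => h3 i, Finset.sum_ite_eq]
    simp [Algebra.algebraMap_eq_smul_one]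
  -- the base-changed form
  have key : (Algebra.traceForm K (K ⊗[κ] F)).compl₂ (LinearMap.mulLeft K ((1 : K) ⊗ₜ[κ] a)) =
      Φ.toLinearMap ∘ₗ LinearMap.baseChange K f := by
    apply bb.ext
    intro j
    apply bb.ext
    intro l
    rw [LinearMap.coe_comp, Function.comp_apply]
    rw [Algebra.TensorProduct.basis_apply, LinearMap.baseChange_tmul]
    rw [LinearEquiv.coe_coe]
    have hRHS : Φ.toLinearMap ((1 : K) ⊗ₜ[κ] f (b j)) (bb l) = algebraMap κ K (f (b j) (b l)) :=
      hΦ _ l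
    rw [← LinearEquiv.coe_coe, hRHS]
    rw [LinearMap.compl₂_apply, Algebra.traceForm_apply, LinearMap.mulLeft_apply]
    rw [Algebra.TensorProduct.basis_apply]
    rw [Algebra.TensorProduct.tmul_mul_tmul, one_mul,
      Algebra.TensorProduct.tmul_mul_tmul, one_mul, htr]
    rw [hf, LinearMap.compl₂_apply, Algebra.traceForm_apply, LinearMap.mulLeft_apply]
  -- rank-nullity on both sides
  haveI : Module.Finite K (K ⊗[κ] F) := inferInstance
  have hker : LinearMap.ker ((Algebra.traceForm K (K ⊗[κ] F)).compl₂
      (LinearMap.mulLeft K ((1 : K) ⊗ₜ[κ] a))) = LinearMap.ker (LinearMap.baseChange K f) := by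
    rw [key, LinearMap.ker_comp_of_ker_eq_bot]
    exact LinearMap.ker_eq_bot_of_injective Φ.injective
  have hexact := Module.Flat.lTensor_exact (M := K) (N := ↥(LinearMap.ker f)) (N' := F)
    (N'' := Module.Dual κ F) f.exact_subtype_ker_map
  have hkerrange : LinearMap.ker (LinearMap.baseChange K f) =
      LinearMap.range (LinearMap.baseChange K (LinearMap.ker f).subtype) := by
    ext x
    rw [LinearMap.mem_ker, LinearMap.mem_range]
    constructor
    · intro hx
      obtain ⟨y, hy⟩ := (hexact x).mp
        (by rw [← congrFun (LinearMap.baseChange_eq_ltensor f) x]; exact hx)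
      exact ⟨y, by
        rw [congrFun (LinearMap.baseChange_eq_ltensor (LinearMap.ker f).subtype) y, hy]⟩
    · rintro ⟨y, rfl⟩
      rw [congrFun (LinearMap.baseChange_eq_ltensor (LinearMap.ker f).subtype) y,
        congrFun (LinearMap.baseChange_eq_ltensor f) _]
      exact (hexact _).mpr ⟨y, rfl⟩
  have hinjsub : Function.Injective (LinearMap.baseChange K (LinearMap.ker f).subtype) := by
    rw [LinearMap.baseChange_eq_ltensor]
    exact Module.Flat.lTensor_preserves_injective_linearMap _ (Submodule.injective_subtype _)
  have hkK : finrank K (LinearMap.ker ((Algebra.traceForm K (K ⊗[κ] F)).compl₂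
      (LinearMap.mulLeft K ((1 : K) ⊗ₜ[κ] a)))) = finrank κ (LinearMap.ker f) := by
    rw [hker, hkerrange, LinearMap.finrank_range_of_inj hinjsub]
    exact Module.finrank_baseChange
  have hrn1 : finrank κ (LinearMap.range f) + finrank κ (LinearMap.ker f) = finrank κ F :=
    f.finrank_range_add_finrank_ker
  have hrn2 : finrank K (LinearMap.range ((Algebra.traceForm K (K ⊗[κ] F)).compl₂
        (LinearMap.mulLeft K ((1 : K) ⊗ₜ[κ] a))))
      + finrank K (LinearMap.ker ((Algebra.traceForm K (K ⊗[κ] F)).compl₂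
        (LinearMap.mulLeft K ((1 : K) ⊗ₜ[κ] a)))) = finrank K (K ⊗[κ] F) :=
    LinearMap.finrank_range_add_finrank_ker _
  have hdim : finrank K (K ⊗[κ] F) = finrank κ F :=
    Module.finrank_baseChange
  omega

theorem hermite_general (κ K F : Type*) [Field κ] [Field K] [Algebra κ K] [IsAlgClosed K]
    [CharZero K] [CommRing F] [Algebra κ F] [FiniteDimensional κ F] (a : F) :
    finrank κ (LinearMap.range ((Algebra.traceForm κ F).compl₂ (LinearMap.mulLeft κ a))) =
      Nat.card (PrimeSpectrum (Localization.Away ((1 : K) ⊗ₜ[κ] a))) := by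
  haveI : Module.Finite K (K ⊗[κ] F) := inferInstance
  rw [card_primeSpectrum_away, rank_form_baseChange κ K F a]
  exact hermite_alg_closed K (K ⊗[κ] F) ((1 : K) ⊗ₜ[κ] a)

/-- **Relative multivariate Hermite quadratic form.**
Let `k` be a field of characteristic 0, `S`, `S'` finite-type commutative `k`-algebras, and
`S → S'` a `k`-algebra homomorphism (encoded by `[Algebra S S'] [IsScalarTower k S S']`).
Let `p` be a prime of `S`, `κ` its residue field (the fraction field of `S ⧸ p`), and `K` an
algebraic closure of `κ`.  If the fiber algebra `F = κ ⊗[S] S'` is finite-dimensional over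
`κ`, then the rank of the trace form of `F` over `κ` equals the number of prime ideals of
`K ⊗[κ] F` (the cardinality of the geometric fiber over `p`); moreover, for every `h ∈ S'`,
the rank of `(f, g) ↦ tr (L_{f h̄ g})` on `F` (with `h̄ = 1 ⊗ h`) equals the number of prime
ideals of the localization of `K ⊗[κ] F` away from the image of `h`. -/
theorem relative_hermite_rank_eq_card_geometric_fiber
    (k S S' κ K : Type*) [Field k] [CharZero k]
    [CommRing S] [CommRing S'] [Algebra k S] [Algebra k S']
    [Algebra.FiniteType k S] [Algebra.FiniteType k S']
    [Algebra S S'] [IsScalarTower k S S']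
    (p : Ideal S) [p.IsPrime]
    [Field κ] [Algebra (S ⧸ p) κ] [IsFractionRing (S ⧸ p) κ]
    [Algebra S κ] [IsScalarTower S (S ⧸ p) κ]
    [Field K] [Algebra κ K] [IsAlgClosure κ K]
    [FiniteDimensional κ (κ ⊗[S] S')] :
    Module.finrank κ (LinearMap.range (Algebra.traceForm κ (κ ⊗[S] S'))) =
        Nat.card (PrimeSpectrum (K ⊗[κ] (κ ⊗[S] S'))) ∧
      ∀ h : S',
        Module.finrank κ
            (LinearMap.range ((Algebra.traceForm κ (κ ⊗[S] S')).compl₂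
              (LinearMap.mulLeft κ ((1 : κ) ⊗ₜ[S] h)))) =
          Nat.card (PrimeSpectrum (Localization.Away
            ((1 : K) ⊗ₜ[κ] ((1 : κ) ⊗ₜ[S] h)))) := by
  haveI : IsAlgClosed K := IsAlgClosure.isAlgClosed κ
  haveI : CharZero K := by
    let f : k →+* K := ((algebraMap κ K).comp ((algebraMap (S ⧸ p) κ).comp
      ((Ideal.Quotient.mk p).comp (algebraMap k S))))
    refine ⟨fun a b hab => ?_⟩
    have h1 : f (a : k) = f (b : k) := by rw [map_natCast, map_natCast]; exact_mod_cast hab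
    exact Nat.cast_injective (f.injective h1)
  constructor
  · have h1 := hermite_general κ K (κ ⊗[S] S') 1
    rw [LinearMap.mulLeft_one, LinearMap.compl₂_id] at h1
    rw [h1]
    have h2 : ((1 : K) ⊗ₜ[κ] (1 : κ ⊗[S] S')) = (1 : K ⊗[κ] (κ ⊗[S] S')) := rfl
    rw [h2, card_primeSpectrum_away]
    exact Nat.card_congr (Equiv.subtypeUnivEquiv fun q =>
      q.asIdeal.ne_top_iff_one.mp q.isPrime.ne_top)
  · intro h
    exact hermite_general κ K (κ ⊗[S] S') ((1 : κ) ⊗ₜ[S] h)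
end

section
/- Let A be a commutative ring and I an ideal of the polynomial ring A[X]. For a prime ideal p of A with residue field κ(p) = FractionRing(A ⧸ p), the fiber ring over p is κ(p)[X] ⧸ I·κ(p)[X], where I·κ(p)[X] is the ideal generated by the images of elements of I under coefficientwise reduction A[X] → κ(p)[X]. Then: (1) the set W = {p ∈ Spec A : the image of I in κ(p)[X] is the zero ideal} is Zariski-closed in Spec A, and W equals the set of primes p for which the fiber ring κ(p)[X] ⧸ I·κ(p)[X] has Krull dimension 1 (equivalently, p ∈ W iff every coefficient of every element of I lies in p); (2) if moreover A is an integral domain and the generic fiber FractionRing(A)[X] ⧸ I·FractionRing(A)[X] is infinite-dimensional as a FractionRing(A)-vector space, then I = 0. -/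
open Polynomial

-- dim ≤ 0 for quotient of k[X] by nonzero ideal
lemma aux_dim_le_zero {F : Type*} [Field F] (J : Ideal F[X]) (hJ : J ≠ ⊥) :
    ringKrullDim (F[X] ⧸ J) ≤ 0 := by
  show Order.krullDim _ ≤ 0
  unfold Order.krullDim
  apply iSup_le
  intro c
  by_contra h
  push_neg at h
  have hlen : 1 ≤ c.length := by
    by_contra h'
    push_neg at h'
    interval_cases hc : c.length <;> simp_all
  have h01 : c ⟨0, by omega⟩ < c ⟨1, by omega⟩ := c.strictMono (show (⟨0, by omega⟩ : Fin (c.length+1)) < ⟨1, by omega⟩ by simp [Fin.lt_def])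
  set q0 := c ⟨0, by omega⟩
  set q1 := c ⟨1, by omega⟩
  have hq0q1 : q0.asIdeal < q1.asIdeal := (PrimeSpectrum.asIdeal_lt_asIdeal _ _).mpr h01
  have hP : (q0.asIdeal.comap (Ideal.Quotient.mk J)).IsPrime := q0.isPrime.comap _
  have hQ : (q1.asIdeal.comap (Ideal.Quotient.mk J)).IsPrime := q1.isPrime.comap _
  have hPQ : q0.asIdeal.comap (Ideal.Quotient.mk J) < q1.asIdeal.comap (Ideal.Quotient.mk J) := by
    refine lt_of_le_of_ne (Ideal.comap_mono hq0q1.le) ?_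
    intro hEq
    exact hq0q1.ne (Ideal.comap_injective_of_surjective _ Ideal.Quotient.mk_surjective hEq)
  have hJP : J ≤ q0.asIdeal.comap (Ideal.Quotient.mk J) := by
    intro x hx
    simp [Ideal.mem_comap, Ideal.Quotient.eq_zero_iff_mem.mpr hx]
  have hPne : q0.asIdeal.comap (Ideal.Quotient.mk J) ≠ ⊥ := by
    intro hbot
    exact hJ (le_bot_iff.mp (hbot ▸ hJP))
  have hmax : (q0.asIdeal.comap (Ideal.Quotient.mk J)).IsMaximal :=
    IsPrime.to_maximal_ideal (hpi := hP) hPne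
  have := hmax.eq_of_le hQ.ne_top hPQ.le
  exact hPQ.ne this

lemma aux_dim_poly (F : Type*) [Field F] : ringKrullDim F[X] = 1 := by
  apply le_antisymm
  · show Order.krullDim _ ≤ 1
    unfold Order.krullDim
    apply iSup_le
    intro c
    by_contra h
    push_neg at h
    have hlen : 2 ≤ c.length := by
      have : (1:ℕ) < c.length := by exact_mod_cast h
      omega
    have h01 : c ⟨0, by omega⟩ < c ⟨1, by omega⟩ := c.strictMono (by simp [Fin.lt_def])
    have h12 : c ⟨1, by omega⟩ < c ⟨2, by omega⟩ := c.strictMono (by simp [Fin.lt_def])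
    set q0 := c ⟨0, by omega⟩
    set q1 := c ⟨1, by omega⟩
    set q2 := c ⟨2, by omega⟩
    have hne : q1.asIdeal ≠ ⊥ := by
      intro hbot
      have := (PrimeSpectrum.asIdeal_lt_asIdeal _ _).mpr h01
      rw [hbot] at this
      exact (not_lt_bot this)
    have hmax : q1.asIdeal.IsMaximal := IsPrime.to_maximal_ideal (hpi := q1.isPrime) hne
    have h12' := (PrimeSpectrum.asIdeal_lt_asIdeal _ _).mpr h12
    exact h12'.ne (hmax.eq_of_le q2.isPrime.ne_top h12'.le)
  · have hXprime : (Ideal.span {(X : F[X])}).IsPrime :=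
      (Ideal.span_singleton_prime Polynomial.X_ne_zero).mpr Polynomial.prime_X
    have hlt : (⟨⊥, Ideal.bot_prime⟩ : PrimeSpectrum F[X]) < ⟨Ideal.span {X}, hXprime⟩ := by
      rw [← PrimeSpectrum.asIdeal_lt_asIdeal]
      simp only [bot_lt_iff_ne_bot, ne_eq, Ideal.span_singleton_eq_bot]
      exact Polynomial.X_ne_zero
    let c : LTSeries (PrimeSpectrum F[X]) :=
      ⟨1, ![⟨⊥, Ideal.bot_prime⟩, ⟨Ideal.span {X}, hXprime⟩], by
        intro i
        fin_cases i
        simpa using hlt⟩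
    have := Order.LTSeries.length_le_krullDim c
    simpa using this




/-- Coefficientwise reduction `A[X] → κ(p)[X]` at a prime `p` of `A`, where
`κ(p) = Frac(A ⧸ p)` is the residue field at `p`. -/
noncomputable def residueFiberMap {A : Type*} [CommRing A] (p : PrimeSpectrum A) :
    Polynomial A →+* Polynomial (FractionRing (A ⧸ p.asIdeal)) :=
  Polynomial.mapRingHom
    ((algebraMap (A ⧸ p.asIdeal) (FractionRing (A ⧸ p.asIdeal))).comp
      (Ideal.Quotient.mk p.asIdeal))

lemma aux_res_zero_iff {A : Type*} [CommRing A] (p : PrimeSpectrum A) (f : Polynomial A) :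
    residueFiberMap p f = 0 ↔ ∀ n, f.coeff n ∈ p.asIdeal := by
  haveI : p.asIdeal.IsPrime := p.isPrime
  have hinj := IsFractionRing.injective (A ⧸ p.asIdeal) (FractionRing (A ⧸ p.asIdeal))
  rw [Polynomial.ext_iff]
  apply forall_congr'
  intro n
  rw [residueFiberMap, Polynomial.coe_mapRingHom, Polynomial.coeff_map, Polynomial.coeff_zero,
    RingHom.comp_apply, ← map_zero (algebraMap (A ⧸ p.asIdeal) (FractionRing (A ⧸ p.asIdeal))),
    hinj.eq_iff]
  exact Ideal.Quotient.eq_zero_iff_mem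


set_option synthInstance.maxHeartbeats 1000000

/-- **Projections of relative dimension 1: the locus of 1-dimensional fibers is closed.**
Let `A` be a commutative ring and `I` an ideal of `A[X]`.  Then
(1) the set `W` of primes `p` of `A` where the image of `I` in `κ(p)[X]` is zero is
Zariski-closed, `W` equals the set of primes where the fiber ring `κ(p)[X] ⧸ I·κ(p)[X]` has
Krull dimension 1, and `p ∈ W` iff every coefficient of every element of `I` lies in `p`;
(2) if `A` is a domain and the generic fiber
`Frac(A)[X] ⧸ I·Frac(A)[X]` is infinite-dimensional over `Frac(A)`, then `I = 0`. -/
theorem isClosed_dimOneFiberLocus_and_generically_infinite_imp_zero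
    (A : Type*) [CommRing A] (I : Ideal (Polynomial A)) :
    IsClosed {p : PrimeSpectrum A | ∀ f ∈ I, residueFiberMap p f = 0} ∧
    (∀ p : PrimeSpectrum A,
      (∀ f ∈ I, residueFiberMap p f = 0) ↔
        ringKrullDim (Polynomial (FractionRing (A ⧸ p.asIdeal)) ⧸
          Ideal.map (residueFiberMap p) I) = 1) ∧
    (∀ p : PrimeSpectrum A,
      (∀ f ∈ I, residueFiberMap p f = 0) ↔
        ∀ f ∈ I, ∀ n : ℕ, f.coeff n ∈ p.asIdeal) ∧
    (∀ [IsDomain A],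
      ¬ Module.Finite (FractionRing A)
          (Polynomial (FractionRing A) ⧸
            Ideal.map (Polynomial.mapRingHom (algebraMap A (FractionRing A))) I) →
        I = ⊥) := by
  refine ⟨?_, ?_, ?_, ?_⟩
  · have heq : {p : PrimeSpectrum A | ∀ f ∈ I, residueFiberMap p f = 0} =
        PrimeSpectrum.zeroLocus {a : A | ∃ f ∈ I, ∃ n : ℕ, f.coeff n = a} := by
      ext p
      simp only [Set.mem_setOf_eq, PrimeSpectrum.mem_zeroLocus, Set.subset_def, Set.mem_setOf_eq,
        SetLike.mem_coe]
      constructor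
      · rintro h a ⟨f, hf, n, rfl⟩
        exact (aux_res_zero_iff p f).mp (h f hf) n
      · intro h f hf
        exact (aux_res_zero_iff p f).mpr fun n => h _ ⟨f, hf, n, rfl⟩
    rw [heq]
    exact PrimeSpectrum.isClosed_zeroLocus _
  · intro p
    constructor
    · intro h
      have hmap : Ideal.map (residueFiberMap p) I = ⊥ := by
        rw [Ideal.map_eq_bot_iff_le_ker]
        intro f hf
        exact RingHom.mem_ker.mpr (h f hf)
      have e := (Ideal.quotEquivOfEq hmap).trans
        (RingEquiv.quotientBot (Polynomial (FractionRing (A ⧸ p.asIdeal))))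
      rw [ringKrullDim_eq_of_ringEquiv e]
      exact aux_dim_poly _
    · intro hdim
      by_contra hcon
      push_neg at hcon
      obtain ⟨f, hf, hne⟩ := hcon
      have hJ : Ideal.map (residueFiberMap p) I ≠ ⊥ := by
        intro hbot
        exact hne (by simpa [hbot] using Ideal.mem_map_of_mem (residueFiberMap p) hf)
      have := aux_dim_le_zero _ hJ
      rw [hdim] at this
      norm_num at this
  · intro p
    exact forall₂_congr fun f _ => aux_res_zero_iff p f
  · intro _ hfin
    by_contra hI
    obtain ⟨f, hfI, hf0⟩ := (Submodule.ne_bot_iff I).mp hI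
    set K := FractionRing A
    have hinj : Function.Injective (algebraMap A K) := IsFractionRing.injective A K
    set g : Polynomial K := Polynomial.map (algebraMap A K) f with hg_def
    have hg : g ≠ 0 := fun h => hf0 ((Polynomial.map_eq_zero_iff hinj).mp h)
    set J := Ideal.map (Polynomial.mapRingHom (algebraMap A K)) I with hJ_def
    have hgJ : g ∈ J := Ideal.mem_map_of_mem _ hfI
    have hle : Ideal.span {g} ≤ J := Ideal.span_le.mpr (by simpa using hgJ)
    haveI : Module.Finite K (AdjoinRoot g) :=
      Module.Finite.of_basis (AdjoinRoot.powerBasis hg).basis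
    let L : AdjoinRoot g →ₐ[K] (Polynomial K ⧸ J) :=
      { Ideal.Quotient.factor hle with
        commutes' := fun k => rfl }
    have hsurj : Function.Surjective L := by
      intro x
      obtain ⟨y, rfl⟩ := Ideal.Quotient.mk_surjective x
      exact ⟨Ideal.Quotient.mk _ y, rfl⟩
    exact hfin (Module.Finite.of_surjective L.toLinearMap hsurj)
end

section
/- (Invariant rank implies invariant signature.) Let n be a natural number and let S be a connected subset of the space of n×n real matrices (with the Euclidean topology) such that every M ∈ S is symmetric and every M ∈ S has the same rank r. Then the number of positive eigenvalues of M (counted with multiplicity) is the same for all M ∈ S; consequently the signature of M, i.e. (number of positive eigenvalues) − (number of negative eigenvalues), counted with multiplicity, is constant on S. -/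
open Matrix Finset Module Submodule

namespace InvSig

variable {n : ℕ}



variable {n : ℕ}

/-- The quadratic form of a matrix. -/
def q (A : Matrix (Fin n) (Fin n) ℝ) (x : Fin n → ℝ) : ℝ := x ⬝ᵥ (A *ᵥ x)

lemma q_cont : Continuous fun p : Matrix (Fin n) (Fin n) ℝ × (Fin n → ℝ) => q p.1 p.2 :=
  Continuous.dotProduct continuous_snd (continuous_fst.matrix_mulVec continuous_snd)

lemma q_smul (A : Matrix (Fin n) (Fin n) ℝ) (c : ℝ) (x : Fin n → ℝ) :
    q A (c • x) = c ^ 2 * q A x := by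
  simp only [q, mulVec_smul, smul_dotProduct, dotProduct_smul, smul_eq_mul]
  ring

lemma q_neg (A : Matrix (Fin n) (Fin n) ℝ) (x : Fin n → ℝ) : q (-A) x = - q A x := by
  simp [q, neg_mulVec]

lemma sum_dotProduct' {α : Type*} (s : Finset α) (f : α → Fin n → ℝ) (y : Fin n → ℝ) :
    (∑ i ∈ s, f i) ⬝ᵥ y = ∑ i ∈ s, f i ⬝ᵥ y := by
  simp only [dotProduct, Finset.sum_apply, Finset.sum_mul]
  exact Finset.sum_comm

lemma dotProduct_sum' {α : Type*} (s : Finset α) (y : Fin n → ℝ) (f : α → Fin n → ℝ) :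
    y ⬝ᵥ (∑ i ∈ s, f i) = ∑ i ∈ s, y ⬝ᵥ f i := by
  simp only [dotProduct, Finset.sum_apply, Finset.mul_sum]
  exact Finset.sum_comm

section eigen

variable {A : Matrix (Fin n) (Fin n) ℝ} (hA : A.IsHermitian)

/-- The coerced eigenvector family. -/
noncomputable def w (hA : A.IsHermitian) : Fin n → (Fin n → ℝ) :=
  fun i => ⇑(hA.eigenvectorBasis i)

lemma w_dot (i j : Fin n) : w hA i ⬝ᵥ w hA j = if i = j then 1 else 0 := by
  have h := orthonormal_iff_ite.mp hA.eigenvectorBasis.orthonormal i j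
  rw [PiLp.inner_apply] at h
  simpa [dotProduct, w, mul_comm] using h

lemma w_indep : LinearIndependent ℝ (w hA) := by
  rw [Fintype.linearIndependent_iff]
  intro c hc i
  have := congrArg (fun y => y ⬝ᵥ w hA i) hc
  simp only [sum_dotProduct', smul_dotProduct, w_dot, smul_eq_mul, mul_ite, mul_one, mul_zero,
    Finset.sum_ite_eq', Finset.mem_univ, if_true, zero_dotProduct] at this
  exact this

lemma mulVec_w (i : Fin n) : A *ᵥ w hA i = hA.eigenvalues i • w hA i :=
  hA.mulVec_eigenvectorBasis i

lemma q_sum_eigen (s : Finset (Fin n)) (c : Fin n → ℝ) :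
    q A (∑ i ∈ s, c i • w hA i) = ∑ i ∈ s, hA.eigenvalues i * (c i) ^ 2 := by
  have hAx : A *ᵥ (∑ i ∈ s, c i • w hA i) = ∑ i ∈ s, (c i * hA.eigenvalues i) • w hA i := by
    rw [show A *ᵥ (∑ i ∈ s, c i • w hA i) = A.mulVecLin (∑ i ∈ s, c i • w hA i) from rfl,
      map_sum]
    refine Finset.sum_congr rfl fun i _ => ?_
    rw [_root_.map_smul, mulVecLin_apply, mulVec_w, smul_smul]
  rw [q, hAx, sum_dotProduct']
  rw [Finset.sum_congr rfl fun i hi => dotProduct_sum' s _ _]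
  have : ∀ i ∈ s, ∑ j ∈ s, (c i • w hA i) ⬝ᵥ ((c j * hA.eigenvalues j) • w hA j)
      = hA.eigenvalues i * (c i) ^ 2 := by
    intro i hi
    have : ∀ j ∈ s, (c i • w hA i) ⬝ᵥ ((c j * hA.eigenvalues j) • w hA j)
        = if i = j then hA.eigenvalues i * (c i) ^ 2 else 0 := by
      intro j hj
      rw [smul_dotProduct, dotProduct_smul, w_dot]
      by_cases h : i = j
      · subst h; simp; ring
      · simp [h]
    rw [Finset.sum_congr rfl this, Finset.sum_ite_eq _ i, if_pos hi]
  rw [Finset.sum_congr rfl this]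

/-- The span of the eigenvectors indexed by `s`. -/
noncomputable def Wspan (hA : A.IsHermitian) (s : Finset (Fin n)) : Submodule ℝ (Fin n → ℝ) :=
  Submodule.span ℝ (w hA '' ↑s)

lemma finrank_Wspan (s : Finset (Fin n)) : finrank ℝ (Wspan hA s) = s.card := by
  classical
  have hind : LinearIndependent ℝ (fun x : (w hA '' (↑s : Set (Fin n))) => (x : Fin n → ℝ)) :=
    ((w_indep hA).linearIndepOn _).id_image
  rw [Wspan, finrank_span_set_eq_card hind, Set.toFinset_image]
  rw [Finset.card_image_of_injective _ (w_indep hA).injective]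
  simp

lemma mem_Wspan {s : Finset (Fin n)} {x : Fin n → ℝ} (hx : x ∈ Wspan hA s) :
    ∃ c : Fin n → ℝ, x = ∑ i ∈ s, c i • w hA i := by
  classical
  have : x ∈ Submodule.span ℝ ((s.image (w hA) : Finset (Fin n → ℝ)) : Set (Fin n → ℝ)) := by
    rwa [Finset.coe_image]
  obtain ⟨f, hf⟩ := mem_span_finset.mp this
  refine ⟨fun i => f (w hA i), ?_⟩
  rw [← hf.2, Finset.sum_image (fun i _ j _ h => (w_indep hA).injective h)]

end eigen


/-- Positive definiteness of the quadratic form of `A` on a submodule. -/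
def PosOn (A : Matrix (Fin n) (Fin n) ℝ) (W : Submodule ℝ (Fin n → ℝ)) : Prop :=
  ∀ x ∈ W, x ≠ 0 → 0 < q A x

/-- Negative definiteness of the quadratic form of `A` on a submodule. -/
def NegOn (A : Matrix (Fin n) (Fin n) ℝ) (W : Submodule ℝ (Fin n → ℝ)) : Prop :=
  ∀ x ∈ W, x ≠ 0 → q A x < 0

section eigen2
variable {A : Matrix (Fin n) (Fin n) ℝ} (hA : A.IsHermitian)

lemma exists_coeff_ne_zero {s : Finset (Fin n)} {c : Fin n → ℝ} {x : Fin n → ℝ}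
    (hx : x = ∑ i ∈ s, c i • w hA i) (hx0 : x ≠ 0) : ∃ i ∈ s, c i ≠ 0 := by
  by_contra hc
  push_neg at hc
  apply hx0
  rw [hx, Finset.sum_congr rfl fun i hi => by rw [hc i hi, zero_smul]]
  simp

lemma posOn_Wspan {s : Finset (Fin n)} (hs : ∀ i ∈ s, 0 < hA.eigenvalues i) :
    PosOn A (Wspan hA s) := by
  intro x hx hx0
  obtain ⟨c, hc⟩ := mem_Wspan hA hx
  obtain ⟨i, his, hci⟩ := exists_coeff_ne_zero hA hc hx0
  rw [hc, q_sum_eigen]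
  apply Finset.sum_pos'
  · intro j hj
    have := (hs j hj).le
    positivity
  · exact ⟨i, his, by have h1 := hs i his; positivity⟩

lemma negOn_Wspan {s : Finset (Fin n)} (hs : ∀ i ∈ s, hA.eigenvalues i < 0) :
    NegOn A (Wspan hA s) := by
  intro x hx hx0
  obtain ⟨c, hc⟩ := mem_Wspan hA hx
  obtain ⟨i, his, hci⟩ := exists_coeff_ne_zero hA hc hx0
  rw [hc, q_sum_eigen]
  have : 0 < ∑ j ∈ s, -(hA.eigenvalues j * (c j) ^ 2) := by
    apply Finset.sum_pos'
    · intro j hj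
      have := (hs j hj).le
      nlinarith [sq_nonneg (c j)]
    · refine ⟨i, his, ?_⟩
      have h1 := hs i his
      have h2 : 0 < (c i) ^ 2 := by positivity
      nlinarith
  rw [Finset.sum_neg_distrib] at this
  linarith

lemma nonposOn_Wspan {s : Finset (Fin n)} (hs : ∀ i ∈ s, hA.eigenvalues i ≤ 0) :
    ∀ x ∈ Wspan hA s, q A x ≤ 0 := by
  intro x hx
  obtain ⟨c, hc⟩ := mem_Wspan hA hx
  rw [hc, q_sum_eigen]
  apply Finset.sum_nonpos
  intro j hj
  have := hs j hj
  nlinarith [sq_nonneg (c j)]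

lemma nonnegOn_Wspan {s : Finset (Fin n)} (hs : ∀ i ∈ s, 0 ≤ hA.eigenvalues i) :
    ∀ x ∈ Wspan hA s, 0 ≤ q A x := by
  intro x hx
  obtain ⟨c, hc⟩ := mem_Wspan hA hx
  rw [hc, q_sum_eigen]
  apply Finset.sum_nonneg
  intro j hj
  have := hs j hj
  positivity

lemma finrank_le_posCard {W : Submodule ℝ (Fin n → ℝ)} (hW : PosOn A W) :
    finrank ℝ W ≤ (univ.filter fun i => 0 < hA.eigenvalues i).card := by
  classical
  by_contra hlt
  push_neg at hlt
  set N := univ.filter fun i => ¬ 0 < hA.eigenvalues i with hN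
  set W' := Wspan hA N with hW'
  have hfin' : finrank ℝ W' = N.card := finrank_Wspan hA N
  have hcards : (univ.filter fun i => 0 < hA.eigenvalues i).card + N.card = n := by
    rw [hN, Finset.card_filter_add_card_filter_not]
    simp
  have hsum := Submodule.finrank_sup_add_finrank_inf_eq W W'
  have htop : finrank ℝ (W ⊔ W' : Submodule ℝ (Fin n → ℝ)) ≤ n := by
    have := Submodule.finrank_le (W ⊔ W' : Submodule ℝ (Fin n → ℝ))
    simpa using this
  have hpos : 0 < finrank ℝ (W ⊓ W' : Submodule ℝ (Fin n → ℝ)) := by omega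
  have hne : (W ⊓ W' : Submodule ℝ (Fin n → ℝ)) ≠ ⊥ := by
    intro hbot
    rw [hbot, finrank_bot] at hpos
    exact lt_irrefl 0 hpos
  obtain ⟨x, hxmem, hx0⟩ := Submodule.exists_mem_ne_zero_of_ne_bot hne
  have h1 : 0 < q A x := hW x hxmem.1 hx0
  have h2 : q A x ≤ 0 := nonposOn_Wspan hA (fun i hi => by
    simp only [hN, Finset.mem_filter] at hi
    exact not_lt.mp hi.2) x hxmem.2
  linarith

lemma finrank_le_negCard {W : Submodule ℝ (Fin n → ℝ)} (hW : NegOn A W) :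
    finrank ℝ W ≤ (univ.filter fun i => hA.eigenvalues i < 0).card := by
  classical
  by_contra hlt
  push_neg at hlt
  set N := univ.filter fun i => ¬ hA.eigenvalues i < 0 with hN
  set W' := Wspan hA N with hW'
  have hfin' : finrank ℝ W' = N.card := finrank_Wspan hA N
  have hcards : (univ.filter fun i => hA.eigenvalues i < 0).card + N.card = n := by
    rw [hN, Finset.card_filter_add_card_filter_not]
    simp
  have hsum := Submodule.finrank_sup_add_finrank_inf_eq W W'
  have htop : finrank ℝ (W ⊔ W' : Submodule ℝ (Fin n → ℝ)) ≤ n := by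
    have := Submodule.finrank_le (W ⊔ W' : Submodule ℝ (Fin n → ℝ))
    simpa using this
  have hpos : 0 < finrank ℝ (W ⊓ W' : Submodule ℝ (Fin n → ℝ)) := by omega
  have hne : (W ⊓ W' : Submodule ℝ (Fin n → ℝ)) ≠ ⊥ := by
    intro hbot
    rw [hbot, finrank_bot] at hpos
    exact lt_irrefl 0 hpos
  obtain ⟨x, hxmem, hx0⟩ := Submodule.exists_mem_ne_zero_of_ne_bot hne
  have h1 : q A x < 0 := hW x hxmem.1 hx0
  have h2 : 0 ≤ q A x := nonnegOn_Wspan hA (fun i hi => by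
    simp only [hN, Finset.mem_filter] at hi
    exact not_lt.mp hi.2) x hxmem.2
  linarith


end eigen2

lemma negOn_iff_posOn_neg (A : Matrix (Fin n) (Fin n) ℝ) (W : Submodule ℝ (Fin n → ℝ)) :
    NegOn A W ↔ PosOn (-A) W := by
  unfold NegOn PosOn
  simp only [q_neg]
  exact forall₃_congr fun x _ _ => by constructor <;> intro h <;> linarith

lemma posOn_stable {A : Matrix (Fin n) (Fin n) ℝ} {W : Submodule ℝ (Fin n → ℝ)}
    (h : PosOn A W) : ∀ᶠ A' in nhds A, PosOn A' W := by
  set K : Set (Fin n → ℝ) := Metric.sphere 0 1 ∩ (W : Set (Fin n → ℝ)) with hKdef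
  have hK : IsCompact K :=
    (isCompact_sphere 0 1).inter_right W.closed_of_finiteDimensional
  have hP : ∀ y ∈ K, ∀ᶠ z : Matrix (Fin n) (Fin n) ℝ × (Fin n → ℝ) in nhds (A, y),
      0 < q z.1 z.2 := by
    intro y hy
    have hy0 : y ≠ 0 := by
      intro h0
      have := hy.1
      rw [h0, mem_sphere_zero_iff_norm] at this
      simp at this
    exact (isOpen_lt continuous_const q_cont).eventually_mem (h y hy.2 hy0)
  filter_upwards [hK.eventually_forall_of_forall_eventually (P := fun A' x => 0 < q A' x) hP] with A' h' x hxW hx0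
  have hy : (‖x‖⁻¹ • x) ∈ K :=
    ⟨by rw [mem_sphere_zero_iff_norm]; exact norm_smul_inv_norm hx0, W.smul_mem _ hxW⟩
  have h1 := h' _ hy
  rw [q_smul] at h1
  have h2 : 0 < (‖x‖⁻¹) ^ 2 := by
    have : ‖x‖ ≠ 0 := norm_ne_zero_iff.mpr hx0
    positivity
  nlinarith

lemma negOn_stable {A : Matrix (Fin n) (Fin n) ℝ} {W : Submodule ℝ (Fin n → ℝ)}
    (h : NegOn A W) : ∀ᶠ A' in nhds A, NegOn A' W := by
  have h1 : PosOn (-A) W := (negOn_iff_posOn_neg A W).mp h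
  have h2 := (continuous_neg.tendsto A).eventually (posOn_stable h1)
  filter_upwards [h2] with A' hA'
  exact (negOn_iff_posOn_neg A' W).mpr hA'

lemma pos_add_neg_card {A : Matrix (Fin n) (Fin n) ℝ} (hA : A.IsHermitian) :
    (univ.filter fun i => 0 < hA.eigenvalues i).card +
      (univ.filter fun i => hA.eigenvalues i < 0).card = A.rank := by
  classical
  rw [hA.rank_eq_card_non_zero_eigs, Fintype.card_subtype]
  have hfe : (univ.filter fun i => hA.eigenvalues i ≠ 0) =
      (univ.filter fun i => 0 < hA.eigenvalues i) ∪
        (univ.filter fun i => hA.eigenvalues i < 0) := by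
    rw [← Finset.filter_or]
    apply Finset.filter_congr
    intro i _
    simp only [ne_eq, eq_iff_iff]
    constructor
    · intro h; rcases lt_or_gt_of_ne h with h1 | h1
      · exact Or.inr h1
      · exact Or.inl h1
    · rintro (h | h) <;> intro h0 <;> rw [h0] at h <;> simp at h
  rw [hfe, Finset.card_union_of_disjoint]
  rw [Finset.disjoint_left]
  intro i hi hi'
  simp only [Finset.mem_filter] at hi hi'
  exact absurd hi'.2 (not_lt.mpr hi.2.le)


end InvSig


/-- **Invariant rank implies invariant signature.**
Let `S` be a connected set of `n × n` real matrices (Euclidean topology) consisting of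
symmetric matrices, all of the same rank `r`.  Then the number of positive eigenvalues
(with multiplicity) is the same for all matrices of `S`; consequently the signature
(number of positive minus number of negative eigenvalues, with multiplicity) is constant
on `S`. -/
theorem invariant_rank_implies_invariant_signature
    (n r : ℕ) (S : Set (Matrix (Fin n) (Fin n) ℝ)) (hconn : IsConnected S)
    (hsymm : ∀ M ∈ S, M.IsSymm) (hrank : ∀ M ∈ S, M.rank = r) :
    ∀ M ∈ S, ∀ M' ∈ S, ∀ (hM : M.IsHermitian) (hM' : M'.IsHermitian),
      (Finset.univ.filter fun i => 0 < hM.eigenvalues i).card =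
          (Finset.univ.filter fun i => 0 < hM'.eigenvalues i).card ∧
      ((Finset.univ.filter fun i => 0 < hM.eigenvalues i).card : ℤ) -
          ((Finset.univ.filter fun i => hM.eigenvalues i < 0).card : ℤ) =
        ((Finset.univ.filter fun i => 0 < hM'.eigenvalues i).card : ℤ) -
          ((Finset.univ.filter fun i => hM'.eigenvalues i < 0).card : ℤ) := by
  classical
  have hherm : ∀ M ∈ S, M.IsHermitian := fun M hMS => by
    rw [Matrix.IsHermitian, Matrix.conjTranspose_eq_transpose_of_trivial]
    exact hsymm M hMS
  -- the positive-eigenvalue count, as a function on the subtype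
  set f : S → ℕ := fun x =>
    (Finset.univ.filter fun i => 0 < (hherm x.1 x.2).eigenvalues i).card with hf
  -- local constancy in the ambient space
  have key : ∀ (M : Matrix (Fin n) (Fin n) ℝ) (hMS : M ∈ S),
      ∀ᶠ M' in nhds M, ∀ hM'S : M' ∈ S, f ⟨M', hM'S⟩ = f ⟨M, hMS⟩ := by
    intro M hMS
    have hM := hherm M hMS
    have hpos : InvSig.PosOn M (InvSig.Wspan hM
        (Finset.univ.filter fun i => 0 < hM.eigenvalues i)) :=
      InvSig.posOn_Wspan hM fun i hi => (Finset.mem_filter.mp hi).2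
    have hneg : InvSig.NegOn M (InvSig.Wspan hM
        (Finset.univ.filter fun i => hM.eigenvalues i < 0)) :=
      InvSig.negOn_Wspan hM fun i hi => (Finset.mem_filter.mp hi).2
    filter_upwards [InvSig.posOn_stable hpos, InvSig.negOn_stable hneg] with M' h1 h2 hM'S
    have hM' := hherm M' hM'S
    have hp : (Finset.univ.filter fun i => 0 < hM.eigenvalues i).card ≤
        (Finset.univ.filter fun i => 0 < hM'.eigenvalues i).card := by
      have := InvSig.finrank_le_posCard hM' h1
      rwa [InvSig.finrank_Wspan] at this
    have hm : (Finset.univ.filter fun i => hM.eigenvalues i < 0).card ≤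
        (Finset.univ.filter fun i => hM'.eigenvalues i < 0).card := by
      have := InvSig.finrank_le_negCard hM' h2
      rwa [InvSig.finrank_Wspan] at this
    have e1 := InvSig.pos_add_neg_card hM'
    have e2 := InvSig.pos_add_neg_card hM
    rw [hrank M' hM'S] at e1
    rw [hrank M hMS] at e2
    simp only [hf]
    have g1 : (Finset.univ.filter fun i => 0 < (hherm M' hM'S).eigenvalues i).card
        = (Finset.univ.filter fun i => 0 < hM'.eigenvalues i).card := rfl
    have g2 : (Finset.univ.filter fun i => 0 < (hherm M hMS).eigenvalues i).card
        = (Finset.univ.filter fun i => 0 < hM.eigenvalues i).card := rfl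
    rw [g1, g2]
    omega
  haveI : PreconnectedSpace S := Subtype.preconnectedSpace hconn.isPreconnected
  have hlc : IsLocallyConstant f := by
    rw [IsLocallyConstant.iff_eventually_eq]
    intro x
    have h2 := (continuous_subtype_val.tendsto x).eventually (key x.1 x.2)
    filter_upwards [h2] with y hy using hy y.2
  intro M hMS M' hM'S hM hM'
  have hpeq : f ⟨M, hMS⟩ = f ⟨M', hM'S⟩ :=
    hlc.apply_eq_of_isPreconnected isPreconnected_univ (Set.mem_univ _) (Set.mem_univ _)
  have hpeq' : (Finset.univ.filter fun i => 0 < hM.eigenvalues i).card =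
      (Finset.univ.filter fun i => 0 < hM'.eigenvalues i).card := hpeq
  have e1 := InvSig.pos_add_neg_card hM
  have e2 := InvSig.pos_add_neg_card hM'
  rw [hrank M hMS] at e1
  rw [hrank M' hM'S] at e2
  exact ⟨hpeq', by omega⟩
end

section
/- (Freeness implies geometric delineability.) Let n ∈ ℕ, P = MvPolynomial (Fin n) ℝ, and let f ∈ P[X] be monic in X of degree ≥ 1 and h ∈ P[X]. Let S ⊆ ℝ^n be connected in the Euclidean topology, and assume there is e' ∈ ℕ such that for every a ∈ S, the number of distinct z ∈ ℂ with f(a; z) = 0 and h(a; z) ≠ 0 equals e' (invariance of the cardinality of the geometric fiber of D(h)). Then there exist e ∈ ℕ and continuous functions ξ₁,…,ξ_e : S → ℝ with ξ₁(a) < ⋯ < ξ_e(a) for all a ∈ S, such that for every a ∈ S the set {z ∈ ℝ : f(a; z) = 0 and h(a; z) ≠ 0} is exactly {ξ₁(a),…,ξ_e(a)}. -/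
open Polynomial Set

noncomputable def evalAtPoint {n : ℕ} (f : Polynomial (MvPolynomial (Fin n) ℝ))
    (a : Fin n → ℝ) : Polynomial ℝ :=
  f.map (MvPolynomial.eval a)

namespace Delineab

variable {n : ℕ}

noncomputable def cpoly (f : Polynomial (MvPolynomial (Fin n) ℝ)) (a : Fin n → ℝ) :
    Polynomial ℂ :=
  (evalAtPoint f a).map (algebraMap ℝ ℂ)

def Zset (f h : Polynomial (MvPolynomial (Fin n) ℝ)) (a : Fin n → ℝ) : Set ℂ :=
  {z : ℂ | (cpoly f a).IsRoot z ∧ ¬ (cpoly h a).IsRoot z}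

def Rset (f h : Polynomial (MvPolynomial (Fin n) ℝ)) (a : Fin n → ℝ) : Set ℝ :=
  {x : ℝ | (evalAtPoint f a).IsRoot x ∧ ¬ (evalAtPoint h a).IsRoot x}

lemma cpoly_monic (f : Polynomial (MvPolynomial (Fin n) ℝ)) (hf : f.Monic) (a : Fin n → ℝ) :
    (cpoly f a).Monic :=
  (hf.map (MvPolynomial.eval a)).map _

lemma cpoly_natDegree (f : Polynomial (MvPolynomial (Fin n) ℝ)) (hf : f.Monic) (a : Fin n → ℝ) :
    (cpoly f a).natDegree = f.natDegree := by
  rw [cpoly, evalAtPoint, (hf.map (MvPolynomial.eval a)).natDegree_map, hf.natDegree_map]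

lemma continuous_cpoly_eval (f : Polynomial (MvPolynomial (Fin n) ℝ)) :
    Continuous fun p : (Fin n → ℝ) × ℂ => (cpoly f p.1).eval p.2 := by
  have key : ∀ p : (Fin n → ℝ) × ℂ, (cpoly f p.1).eval p.2
      = ∑ i ∈ Finset.range (f.natDegree + 1),
          ((MvPolynomial.eval p.1 (f.coeff i) : ℝ) : ℂ) * p.2 ^ i := by
    intro p
    rw [cpoly, evalAtPoint, Polynomial.map_map, eval_map,
      eval₂_eq_sum_range' _ (Nat.lt_succ_self _)]
    simp [Complex.coe_algebraMap]
  simp only [key]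
  apply continuous_finset_sum
  intro i _
  exact (Complex.continuous_ofReal.comp
    ((MvPolynomial.continuous_eval _).comp continuous_fst)).mul (continuous_snd.pow i)

lemma exists_root_near (p : Polynomial ℂ) (hp : p.Monic) {z₀ : ℂ} {ε : ℝ} (hε : 0 < ε)
    (hlt : ‖p.eval z₀‖ < ε ^ p.natDegree) :
    ∃ z : ℂ, p.IsRoot z ∧ dist z z₀ < ε := by
  by_contra hc
  push_neg at hc
  have hsp : p.Splits := IsAlgClosed.splits p
  have hcard : p.roots.card = p.natDegree := (splits_iff_card_roots).mp hsp
  have heval : p.eval z₀ = ((p.roots.map fun r => z₀ - r)).prod := by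
    conv_lhs => rw [hsp.eq_prod_roots_of_monic hp]
    rw [eval_multiset_prod, Multiset.map_map]
    simp
  have hge : ∀ s : Multiset ℂ, (∀ r ∈ s, ε ≤ ‖z₀ - r‖) →
      ε ^ Multiset.card s ≤ ‖(s.map fun r => z₀ - r).prod‖ := by
    intro s
    induction s using Multiset.induction with
    | empty => simp
    | cons a s ih =>
      intro hs
      rw [Multiset.map_cons, Multiset.prod_cons, norm_mul, Multiset.card_cons, pow_succ']
      exact mul_le_mul (hs a (Multiset.mem_cons_self a s))
        (ih fun r hr => hs r (Multiset.mem_cons_of_mem hr)) (by positivity)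
        (norm_nonneg _)
  have hfin : ε ^ p.natDegree ≤ ‖p.eval z₀‖ := by
    rw [heval, ← hcard]
    apply hge
    intro r hr
    have h1 : ε ≤ dist r z₀ := hc r (isRoot_of_mem_roots hr)
    rwa [dist_comm, Complex.dist_eq] at h1
  linarith

lemma cpoly_eval_conj (f : Polynomial (MvPolynomial (Fin n) ℝ)) (a : Fin n → ℝ) (z : ℂ) :
    (cpoly f a).eval ((starRingEnd ℂ) z) = (starRingEnd ℂ) ((cpoly f a).eval z) := by
  rw [cpoly, eval_map, eval_map, ← aeval_def, ← aeval_def]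
  exact Polynomial.aeval_conj _ _

lemma cpoly_eval_ofReal (f : Polynomial (MvPolynomial (Fin n) ℝ)) (a : Fin n → ℝ) (x : ℝ) :
    (cpoly f a).eval (x : ℂ) = (((evalAtPoint f a).eval x : ℝ) : ℂ) := by
  rw [cpoly, eval_map, ← aeval_def]
  have hx : (x : ℂ) = algebraMap ℝ ℂ x := rfl
  rw [hx, aeval_algebraMap_apply_eq_algebraMap_eval]
  rfl

lemma mem_Zset_ofReal {f h : Polynomial (MvPolynomial (Fin n) ℝ)} {a : Fin n → ℝ} {x : ℝ} :
    (x : ℂ) ∈ Zset f h a ↔ x ∈ Rset f h a := by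
  simp [Zset, Rset, IsRoot, cpoly_eval_ofReal, Complex.ofReal_eq_zero]

lemma Zset_finite (f h : Polynomial (MvPolynomial (Fin n) ℝ)) (hf : f.Monic) (a : Fin n → ℝ) :
    (Zset f h a).Finite :=
  (Polynomial.finite_setOf_isRoot (cpoly_monic f hf a).ne_zero).subset fun _ hz => hz.1

lemma Rset_finite (f h : Polynomial (MvPolynomial (Fin n) ℝ)) (hf : f.Monic) (a : Fin n → ℝ) :
    (Rset f h a).Finite :=
  (Polynomial.finite_setOf_isRoot (hf.map (MvPolynomial.eval a)).ne_zero).subset fun _ hz => hz.1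

lemma orderIsoOfFin_close {e : ℕ} {s t : Finset ℝ} (hs : s.card = e) (ht : t.card = e)
    {ε : ℝ} {σ : ℝ → ℝ}
    (hmaps : ∀ x ∈ s, σ x ∈ t)
    (hsurj : ∀ y ∈ t, ∃ x ∈ s, σ x = y)
    (hclose : ∀ x ∈ s, |σ x - x| < ε)
    (hmono : ∀ x ∈ s, ∀ y ∈ s, x < y → σ x < σ y)
    (i : Fin e) :
    |(t.orderIsoOfFin ht i : ℝ) - (s.orderIsoOfFin hs i : ℝ)| < ε := by
  set F : Fin e → t := fun j => ⟨σ (s.orderIsoOfFin hs j : ℝ),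
    hmaps _ (s.orderIsoOfFin hs j).2⟩ with hF
  have hFmono : StrictMono F := by
    intro j j' hjj'
    have h1 : (s.orderIsoOfFin hs j : ℝ) < (s.orderIsoOfFin hs j' : ℝ) :=
      Subtype.coe_lt_coe.mpr ((s.orderIsoOfFin hs).strictMono hjj')
    exact Subtype.mk_lt_mk.mpr (hmono _ (s.orderIsoOfFin hs j).2 _ (s.orderIsoOfFin hs j').2 h1)
  have hFsurj : Function.Surjective F := by
    rintro ⟨y, hy⟩
    obtain ⟨x, hx, hxy⟩ := hsurj y hy
    refine ⟨(s.orderIsoOfFin hs).symm ⟨x, hx⟩, ?_⟩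
    apply Subtype.ext
    simp only [hF]
    rw [OrderIso.apply_symm_apply]
    exact hxy
  have hsub : (StrictMono.orderIsoOfSurjective F hFmono hFsurj) = t.orderIsoOfFin ht :=
    Subsingleton.elim _ _
  have : (t.orderIsoOfFin ht i : ℝ) = σ (s.orderIsoOfFin hs i : ℝ) := by
    rw [← hsub]
    rfl
  rw [this]
  exact hclose _ (s.orderIsoOfFin hs i).2

end Delineab

namespace Delineab

lemma local_structure {n : ℕ} (f h : Polynomial (MvPolynomial (Fin n) ℝ)) (hf : f.Monic)
    (S : Set (Fin n → ℝ)) (e' : ℕ)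
    (hgeo : ∀ a ∈ S, (Zset f h a).ncard = e')
    (a₀ : Fin n → ℝ) (ha₀ : a₀ ∈ S) (δ : ℝ) (hδ : 0 < δ) :
    ∃ ε : ℝ, 0 < ε ∧ ε ≤ δ ∧ ∃ U : Set (Fin n → ℝ), IsOpen U ∧ a₀ ∈ U ∧
      ∀ a ∈ U, a ∈ S → ∃ σ : ℝ → ℝ,
        (∀ x ∈ Rset f h a₀, σ x ∈ Rset f h a) ∧
        (∀ y ∈ Rset f h a, ∃ x ∈ Rset f h a₀, σ x = y) ∧
        (∀ x ∈ Rset f h a₀, |σ x - x| < ε) ∧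
        (∀ x ∈ Rset f h a₀, ∀ x' ∈ Rset f h a₀, x < x' → σ x < σ x') := by
  classical
  have hZfin : ∀ a, (Zset f h a).Finite := Zset_finite f h hf
  set T : Finset ℂ := (hZfin a₀).toFinset with hT
  have hmemT : ∀ w : ℂ, w ∈ T ↔ w ∈ Zset f h a₀ := fun w => (hZfin a₀).mem_toFinset
  -- tube data for h
  have tube : ∀ w : ℂ, ∃ (U : Set (Fin n → ℝ)) (r : ℝ), 0 < r ∧ IsOpen U ∧ a₀ ∈ U ∧
      (w ∈ Zset f h a₀ → ∀ a ∈ U, ∀ z : ℂ, dist z w < r → (cpoly h a).eval z ≠ 0) := by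
    intro w
    by_cases hw : w ∈ Zset f h a₀
    · have hopen : IsOpen ((fun p : (Fin n → ℝ) × ℂ =>
          (cpoly h p.1).eval p.2) ⁻¹' {0})ᶜ :=
        (isClosed_singleton.preimage (continuous_cpoly_eval h)).isOpen_compl
      have hmem : (a₀, w) ∈ ((fun p : (Fin n → ℝ) × ℂ =>
          (cpoly h p.1).eval p.2) ⁻¹' {0})ᶜ := by
        simpa using hw.2
      obtain ⟨U, V, hU, hV, haU, hwV, hsub⟩ := isOpen_prod_iff.mp hopen a₀ w hmem
      obtain ⟨r, hr, hball⟩ := Metric.isOpen_iff.mp hV w hwV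
      refine ⟨U, r, hr, hU, haU, fun _ a haU' z hz => ?_⟩
      have := hsub (Set.mk_mem_prod haU' (hball hz))
      simpa using this
    · exact ⟨Set.univ, 1, one_pos, isOpen_univ, trivial, fun hw' => absurd hw' hw⟩
  choose Uh rh hrpos hUopen haU htube using tube
  -- the Finset of candidate bounds
  set P : Finset ℝ := insert δ (((((T ×ˢ T).filter fun p => p.1 ≠ p.2).image
      fun p => dist p.1 p.2 / 2) ∪ ((T.filter fun w => w.im ≠ 0).image fun w => |w.im|))
      ∪ T.image rh) with hP
  have hPne : δ ∈ P := Finset.mem_insert_self _ _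
  set ε := P.min' (Finset.insert_nonempty δ _) with hε
  have hεpos : 0 < ε := by
    rw [hε]
    rw [Finset.lt_min'_iff]
    intro b hb
    rcases Finset.mem_insert.mp hb with rfl | hb
    · exact hδ
    rcases Finset.mem_union.mp hb with hb | hb
    · rcases Finset.mem_union.mp hb with hb | hb
      · obtain ⟨p, hp, rfl⟩ := Finset.mem_image.mp hb
        have hne := (Finset.mem_filter.mp hp).2
        have : (0:ℝ) < dist p.1 p.2 := dist_pos.mpr hne
        linarith
      · obtain ⟨w, hw, rfl⟩ := Finset.mem_image.mp hb
        exact abs_pos.mpr (Finset.mem_filter.mp hw).2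
    · obtain ⟨w, _, rfl⟩ := Finset.mem_image.mp hb
      exact hrpos w
  have hεle : ∀ b ∈ P, ε ≤ b := fun b hb => Finset.min'_le _ _ hb
  have hεδ : ε ≤ δ := hεle δ hPne
  have hεsep : ∀ w ∈ Zset f h a₀, ∀ w' ∈ Zset f h a₀, w ≠ w' → 2 * ε ≤ dist w w' := by
    intro w hw w' hw' hne
    have hb : dist w w' / 2 ∈ P := by
      refine Finset.mem_insert_of_mem (Finset.mem_union_left _ (Finset.mem_union_left _ ?_))
      refine Finset.mem_image.mpr ⟨(w, w'), ?_, rfl⟩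
      exact Finset.mem_filter.mpr ⟨Finset.mem_product.mpr
        ⟨(hmemT w).mpr hw, (hmemT w').mpr hw'⟩, hne⟩
    have := hεle _ hb
    linarith
  have hεim : ∀ w ∈ Zset f h a₀, w.im ≠ 0 → ε ≤ |w.im| := by
    intro w hw him
    refine hεle _ (Finset.mem_insert_of_mem (Finset.mem_union_left _
      (Finset.mem_union_right _ ?_)))
    exact Finset.mem_image.mpr ⟨w, Finset.mem_filter.mpr ⟨(hmemT w).mpr hw, him⟩, rfl⟩
  have hεrh : ∀ w ∈ Zset f h a₀, ε ≤ rh w := by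
    intro w hw
    exact hεle _ (Finset.mem_insert_of_mem (Finset.mem_union_right _
      (Finset.mem_image.mpr ⟨w, (hmemT w).mpr hw, rfl⟩)))
  -- the open neighbourhood U
  set d := f.natDegree with hd
  set U : Set (Fin n → ℝ) :=
    ⋂ w ∈ T, (Uh w ∩ {a | ‖(cpoly f a).eval w‖ < ε ^ d}) with hU
  have hUopen' : IsOpen U := by
    refine isOpen_biInter_finset fun w _ => (hUopen w).inter ?_
    have hc : Continuous fun a : Fin n → ℝ => ‖(cpoly f a).eval w‖ :=
      continuous_norm.comp
        ((continuous_cpoly_eval f).comp (continuous_id.prodMk continuous_const))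
    exact isOpen_lt hc continuous_const
  have ha₀U : a₀ ∈ U := by
    rw [hU]
    refine Set.mem_iInter₂.mpr fun w hw => ⟨haU w, ?_⟩
    have : (cpoly f a₀).eval w = 0 := ((hmemT w).mp hw).1
    simp only [Set.mem_setOf_eq, this, norm_zero]
    positivity
  refine ⟨ε, hεpos, hεδ, U, hUopen', ha₀U, ?_⟩
  intro a haUmem haS
  have haU' : ∀ w ∈ Zset f h a₀, a ∈ Uh w ∧ ‖(cpoly f a).eval w‖ < ε ^ d := by
    intro w hw
    have := Set.mem_iInter₂.mp haUmem w ((hmemT w).mpr hw)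
    exact this
  -- existence of nearby roots
  have hgex : ∀ w : ℂ, ∃ z : ℂ, w ∈ Zset f h a₀ → z ∈ Zset f h a ∧ dist z w < ε := by
    intro w
    by_cases hw : w ∈ Zset f h a₀
    · have hlt : ‖(cpoly f a).eval w‖ < ε ^ (cpoly f a).natDegree := by
        rw [cpoly_natDegree f hf a]
        exact (haU' w hw).2
      obtain ⟨z, hzroot, hzd⟩ := exists_root_near (cpoly f a) (cpoly_monic f hf a) hεpos hlt
      refine ⟨z, fun _ => ⟨⟨hzroot, ?_⟩, hzd⟩⟩
      exact htube w hw a (haU' w hw).1 z (lt_of_lt_of_le hzd (hεrh w hw))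
    · exact ⟨0, fun hw' => absurd hw' hw⟩
  choose g hg using hgex
  have hginj : Set.InjOn g (Zset f h a₀) := by
    intro w hw w' hw' heq
    by_contra hne
    have h1 := (hg w hw).2
    have h2 := (hg w' hw').2
    have h3 := hεsep w hw w' hw' hne
    have : dist w w' ≤ dist w (g w) + dist (g w') w' := by
      rw [heq]
      exact dist_triangle _ _ _
    rw [dist_comm w (g w)] at this
    linarith
  have himg : g '' Zset f h a₀ = Zset f h a := by
    refine Set.eq_of_subset_of_ncard_le ?_ ?_ (hZfin a)
    · rintro z ⟨w, hw, rfl⟩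
      exact (hg w hw).1
    · rw [Set.ncard_image_of_injOn hginj, hgeo a₀ ha₀, hgeo a haS]
  have huniq : ∀ w ∈ Zset f h a₀, ∀ z ∈ Zset f h a, dist z w < ε → z = g w := by
    intro w hw z hz hdz
    obtain ⟨w', hw', rfl⟩ := himg ▸ hz
    by_cases hne : w' = w
    · rw [hne]
    · exfalso
      have h1 := (hg w' hw').2
      have h3 := hεsep w' hw' w hw hne
      have : dist w' w ≤ dist w' (g w') + dist (g w') w := by
        exact dist_triangle _ _ _
      rw [dist_comm w' (g w')] at this
      linarith
  have hconjZ : ∀ z ∈ Zset f h a, (starRingEnd ℂ) z ∈ Zset f h a := by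
    intro z hz
    constructor
    · show (cpoly f a).eval _ = 0
      rw [cpoly_eval_conj, show (cpoly f a).eval z = 0 from hz.1]
      simp
    · show ¬ (cpoly h a).eval _ = 0
      rw [cpoly_eval_conj]
      simp only [_root_.map_eq_zero]
      exact hz.2
  -- each g w with w real is real
  have hgreal : ∀ x : ℝ, ((x : ℂ) ∈ Zset f h a₀) → ((g (x:ℂ)).re : ℂ) = g (x:ℂ) := by
    intro x hx
    have h1 := hg (x:ℂ) hx
    have hconj : (starRingEnd ℂ) (g (x:ℂ)) ∈ Zset f h a := hconjZ _ h1.1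
    have hd2 : dist ((starRingEnd ℂ) (g (x:ℂ))) (x:ℂ) < ε := by
      have : dist ((starRingEnd ℂ) (g (x:ℂ))) ((starRingEnd ℂ) (x:ℂ)) = dist (g (x:ℂ)) (x:ℂ) :=
        Complex.dist_conj_conj _ _
      rw [Complex.conj_ofReal] at this
      rw [this]
      exact h1.2
    have := huniq (x:ℂ) hx _ hconj hd2
    exact Complex.conj_eq_iff_re.mp this
  refine ⟨fun x => (g (x : ℂ)).re, ?_, ?_, ?_, ?_⟩
  · -- maps to
    intro x hx
    have hxZ : (x:ℂ) ∈ Zset f h a₀ := mem_Zset_ofReal.mpr hx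
    have := (hg (x:ℂ) hxZ).1
    rw [← hgreal x hxZ] at this
    exact mem_Zset_ofReal.mp this
  · -- surjective onto
    intro y hy
    have hyZ : (y:ℂ) ∈ Zset f h a := mem_Zset_ofReal.mpr hy
    obtain ⟨w, hw, hgw⟩ := himg ▸ hyZ
    have hdw : dist (y:ℂ) w < ε := hgw ▸ (hg w hw).2
    have him : w.im = 0 := by
      by_contra him
      have h1 : ε ≤ |w.im| := hεim w hw him
      have h2 : |w.im| ≤ dist (y:ℂ) w := by
        rw [Complex.dist_eq]
        have : ((y:ℂ) - w).im = -w.im := by simp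
        calc |w.im| = |((y:ℂ) - w).im| := by rw [this, abs_neg]
          _ ≤ ‖(y:ℂ) - w‖ := Complex.abs_im_le_norm _
      linarith
    have hwre : ((w.re : ℝ) : ℂ) = w := by
      apply Complex.ext <;> simp [him]
    refine ⟨w.re, ?_, ?_⟩
    · apply mem_Zset_ofReal.mp
      rw [hwre]
      exact hw
    · show (g (((w.re : ℝ)) : ℂ)).re = y
      rw [hwre, hgw, Complex.ofReal_re]
  · -- closeness
    intro x hx
    have hxZ : (x:ℂ) ∈ Zset f h a₀ := mem_Zset_ofReal.mpr hx
    have h1 := (hg (x:ℂ) hxZ).2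
    show dist ((g (x:ℂ)).re) x < ε
    rw [← Complex.isometry_ofReal.dist_eq, hgreal x hxZ]
    exact h1
  · -- strictly monotone
    intro x hx x' hx' hlt
    have hxZ : (x:ℂ) ∈ Zset f h a₀ := mem_Zset_ofReal.mpr hx
    have hxZ' : (x':ℂ) ∈ Zset f h a₀ := mem_Zset_ofReal.mpr hx'
    have h1 : dist ((g (x:ℂ)).re) x < ε := by
      rw [← Complex.isometry_ofReal.dist_eq, hgreal x hxZ]
      exact (hg (x:ℂ) hxZ).2
    have h2 : dist ((g (x':ℂ)).re) x' < ε := by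
      rw [← Complex.isometry_ofReal.dist_eq, hgreal x' hxZ']
      exact (hg (x':ℂ) hxZ').2
    have hsep : 2 * ε ≤ dist (x:ℂ) (x':ℂ) := by
      refine hεsep _ hxZ _ hxZ' ?_
      simpa using ne_of_lt hlt
    rw [Complex.isometry_ofReal.dist_eq, Real.dist_eq, abs_of_nonpos (by linarith)] at hsep
    rw [Real.dist_eq, abs_lt] at h1 h2
    show (g (x:ℂ)).re < (g (x':ℂ)).re
    linarith

end Delineab

open Delineab

/-- **Freeness implies geometric delineability.**
Let `P = ℝ[x₁,…,xₙ]`, let `f ∈ P[X]` be monic in `X` of degree `≥ 1` (so that `P[X]/⟨f⟩` is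
a free `P`-module of finite rank) and `h ∈ P[X]`.  Let `S ⊆ ℝⁿ` be connected, and suppose
the number of distinct `z ∈ ℂ` with `f(a; z) = 0` and `h(a; z) ≠ 0` is a constant `e'` for
`a ∈ S`.  Then there are `e ∈ ℕ` and continuous functions `ξ₁ < ⋯ < ξ_e : S → ℝ` such that
for every `a ∈ S` the set `{x ∈ ℝ : f(a; x) = 0 ∧ h(a; x) ≠ 0}` is exactly
`{ξ₁(a),…,ξ_e(a)}`. -/
theorem freeness_implies_geometric_delineability
    (n : ℕ) (f h : Polynomial (MvPolynomial (Fin n) ℝ))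
    (hf : f.Monic) (hdeg : 1 ≤ f.natDegree)
    (S : Set (Fin n → ℝ)) (hconn : IsConnected S) (e' : ℕ)
    (hgeo : ∀ a ∈ S,
      {z : ℂ | ((evalAtPoint f a).map (algebraMap ℝ ℂ)).IsRoot z ∧
        ¬ ((evalAtPoint h a).map (algebraMap ℝ ℂ)).IsRoot z}.ncard = e') :
    ∃ (e : ℕ) (ξ : Fin e → S → ℝ),
      (∀ i, Continuous (ξ i)) ∧
      (∀ a : S, StrictMono fun i => ξ i a) ∧
      ∀ a : S,
        {x : ℝ | (evalAtPoint f a.val).IsRoot x ∧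
            ¬ (evalAtPoint h a.val).IsRoot x} =
          Set.range fun i => ξ i a := by
  classical
  obtain ⟨a₀pt, ha₀pt⟩ := hconn.nonempty
  have hgeo' : ∀ a ∈ S, (Zset f h a).ncard = e' := hgeo
  have hRfin : ∀ a : Fin n → ℝ, (Rset f h a).Finite := Rset_finite f h hf
  have hS : PreconnectedSpace S := Subtype.preconnectedSpace hconn.isPreconnected
  set N : S → ℕ := fun a => (Rset f h a.1).ncard with hN
  have hNlc : IsLocallyConstant N := by
    rw [IsLocallyConstant.iff_exists_open]
    intro x
    obtain ⟨ε, hε, hεδ, U, hUo, hxU, hUprop⟩ :=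
      local_structure f h hf S e' hgeo' x.1 x.2 1 one_pos
    refine ⟨Subtype.val ⁻¹' U, hUo.preimage continuous_subtype_val, hxU, ?_⟩
    intro y hyU
    obtain ⟨σ, hmaps, hsurj, _, hmono⟩ := hUprop y.1 hyU y.2
    have hinj : Set.InjOn σ (Rset f h x.1) := by
      intro u hu v hv huv
      by_contra hne
      rcases lt_or_gt_of_ne hne with hlt | hlt
      · exact absurd huv (ne_of_lt (hmono u hu v hv hlt))
      · exact absurd huv.symm (ne_of_lt (hmono v hv u hu hlt))
    have himg : σ '' (Rset f h x.1) = Rset f h y.1 := by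
      apply Set.Subset.antisymm
      · rintro z ⟨u, hu, rfl⟩; exact hmaps u hu
      · intro z hz; obtain ⟨u, hu, rfl⟩ := hsurj z hz; exact ⟨u, hu, rfl⟩
    show (Rset f h y.1).ncard = (Rset f h x.1).ncard
    rw [← himg, Set.ncard_image_of_injOn hinj]
  set e := N ⟨a₀pt, ha₀pt⟩ with he
  have hNe : ∀ a : S, N a = e := fun a => hNlc.apply_eq_of_preconnectedSpace a ⟨a₀pt, ha₀pt⟩
  have hcard : ∀ a : S, ((hRfin a.1).toFinset).card = e := by
    intro a
    rw [← Set.ncard_eq_toFinset_card _ (hRfin a.1)]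
    exact hNe a
  refine ⟨e, fun i a => (((hRfin a.1).toFinset.orderIsoOfFin (hcard a)) i : ℝ), ?_, ?_, ?_⟩
  · -- continuity
    intro i
    rw [Metric.continuous_iff]
    intro a δ hδ
    obtain ⟨ε, hεpos, hεδ, U, hUo, haU, hUprop⟩ :=
      local_structure f h hf S e' hgeo' a.1 a.2 δ hδ
    obtain ⟨r, hr, hball⟩ := Metric.isOpen_iff.mp hUo a.1 haU
    refine ⟨r, hr, ?_⟩
    intro b hb
    have hbU : b.1 ∈ U := hball (by rw [Metric.mem_ball, ← Subtype.dist_eq]; exact hb)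
    obtain ⟨σ, hmaps, hsurj, hclose, hmono⟩ := hUprop b.1 hbU b.2
    have hkey := orderIsoOfFin_close (hcard a) (hcard b) (σ := σ) (ε := ε)
      (fun x hx => (hRfin b.1).mem_toFinset.mpr (hmaps x ((hRfin a.1).mem_toFinset.mp hx)))
      (fun y hy => by
        obtain ⟨x, hx, hxy⟩ := hsurj y ((hRfin b.1).mem_toFinset.mp hy)
        exact ⟨x, (hRfin a.1).mem_toFinset.mpr hx, hxy⟩)
      (fun x hx => hclose x ((hRfin a.1).mem_toFinset.mp hx))
      (fun x hx y hy hxy => hmono x ((hRfin a.1).mem_toFinset.mp hx) y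
        ((hRfin a.1).mem_toFinset.mp hy) hxy) i
    rw [Real.dist_eq]
    exact lt_of_lt_of_le hkey hεδ
  · -- strict monotonicity
    intro a i j hij
    exact Subtype.coe_lt_coe.mpr (((hRfin a.1).toFinset.orderIsoOfFin (hcard a)).strictMono hij)
  · -- range identification
    intro a
    show Rset f h a.1 = _
    have h1 : (Set.range fun i : Fin e =>
        (((hRfin a.1).toFinset.orderIsoOfFin (hcard a)) i : ℝ))
        = ↑((hRfin a.1).toFinset) := by
      have h2 : (fun i : Fin e => (((hRfin a.1).toFinset.orderIsoOfFin (hcard a)) i : ℝ))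
          = ⇑((hRfin a.1).toFinset.orderEmbOfFin (hcard a)) := by
        funext i
        exact Finset.coe_orderIsoOfFin_apply _ _ _
      rw [h2, Finset.range_orderEmbOfFin]
    rw [h1, Set.Finite.coe_toFinset]
end

section
/- Let A be a commutative ring, J an ideal of the polynomial ring A[X], and B = A[X] ⧸ J, with s the image of X in B. Then: (a) B is generated by at most n elements as an A-module if and only if J contains a monic polynomial of degree at most n, and in that case B is generated by 1, s, …, s^{n−1}; in particular, B is a finitely generated A-module if and only if J contains a monic polynomial; (b) B is a finitely generated free A-module if and only if J can be generated by a single monic polynomial, and in that case B has an A-basis of the form 1, s, …, s^{n−1}. -/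
set_option maxHeartbeats 1000000


/-- **Eisenbud, Prop. 4.1: finite and free quotients of `A[X]`.**
Let `A` be a commutative ring, `J` an ideal of `A[X]`, `B = A[X] ⧸ J` and `s` the image of
`X` in `B`.  Then:
(a) `B` is generated by `≤ n` elements as an `A`-module iff `J` contains a monic polynomial
of degree `≤ n`, in which case `B` is generated by `1, s, …, s^{n−1}`; in particular `B` is
a finitely generated `A`-module iff `J` contains a monic polynomial;
(b) `B` is a finitely generated free `A`-module iff `J` is generated by a single monic
polynomial, in which case `B` has an `A`-basis `1, s, …, s^{n−1}`. -/
theorem quotient_polynomial_finite_free_iff_monic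
    (A : Type*) [CommRing A] (J : Ideal (Polynomial A)) :
    (∀ n : ℕ,
      (∃ t : Finset (Polynomial A ⧸ J), t.card ≤ n ∧
          Submodule.span A (t : Set (Polynomial A ⧸ J)) = ⊤) ↔
        ∃ p ∈ J, p.Monic ∧ p.natDegree ≤ n) ∧
    (∀ n : ℕ, (∃ p ∈ J, p.Monic ∧ p.natDegree ≤ n) →
      Submodule.span A
          (Set.range fun i : Fin n => (Ideal.Quotient.mk J Polynomial.X) ^ (i : ℕ)) = ⊤) ∧
    (Module.Finite A (Polynomial A ⧸ J) ↔ ∃ p ∈ J, p.Monic) ∧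
    ((Module.Finite A (Polynomial A ⧸ J) ∧ Module.Free A (Polynomial A ⧸ J)) ↔
      ∃ p : Polynomial A, p.Monic ∧ J = Ideal.span {p}) ∧
    (∀ p : Polynomial A, p.Monic → J = Ideal.span {p} →
      ∃ b : Module.Basis (Fin p.natDegree) A (Polynomial A ⧸ J),
        ∀ i, b i = (Ideal.Quotient.mk J Polynomial.X) ^ (i : ℕ)) := by
  classical
  -- mk of a monomial
  have hmono : ∀ (i : ℕ) (c : A), Ideal.Quotient.mk J (Polynomial.monomial i c)
      = c • (Ideal.Quotient.mk J Polynomial.X) ^ i := by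
    intro i c
    have h1 : (Polynomial.monomial i c : Polynomial A) = c • Polynomial.X ^ i := by
      rw [Polynomial.smul_eq_C_mul, Polynomial.C_mul_X_pow_eq_monomial]
    rw [h1, ← Ideal.Quotient.mkₐ_eq_mk A J, map_smul, map_pow]
  -- mk of a polynomial of small degree as a sum
  have hmksum : ∀ (q : Polynomial A) (m : ℕ), q.natDegree < m →
      Ideal.Quotient.mk J q
        = ∑ i : Fin m, q.coeff i • (Ideal.Quotient.mk J Polynomial.X) ^ (i : ℕ) := by
    intro q m hqm
    conv_lhs => rw [Polynomial.as_sum_range' q m hqm]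
    rw [map_sum,
      Fin.sum_univ_eq_sum_range (fun i => q.coeff i • (Ideal.Quotient.mk J Polynomial.X) ^ i)]
    exact Finset.sum_congr rfl fun i _ => hmono i _
  -- aeval at mk X
  have haev : ∀ q : Polynomial A,
      Polynomial.aeval (Ideal.Quotient.mk J Polynomial.X) q = Ideal.Quotient.mk J q := by
    intro q
    have := Polynomial.aeval_algHom_apply (Ideal.Quotient.mkₐ A J) Polynomial.X q
    simpa [Ideal.Quotient.mkₐ_eq_mk, Polynomial.aeval_X_left_apply] using this
  -- generation lemma
  have hgen : ∀ n : ℕ, (∃ p ∈ J, p.Monic ∧ p.natDegree ≤ n) →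
      Submodule.span A
        (Set.range fun i : Fin n => (Ideal.Quotient.mk J Polynomial.X) ^ (i : ℕ)) = ⊤ := by
    rintro n ⟨p, hpJ, hpm, hpd⟩
    rcases subsingleton_or_nontrivial A with hA | hA
    · rw [eq_top_iff]
      rintro x -
      obtain ⟨f, rfl⟩ := Ideal.Quotient.mk_surjective x
      rw [Subsingleton.elim f 0, map_zero]
      exact Submodule.zero_mem _
    rw [eq_top_iff]
    rintro x -
    obtain ⟨f, rfl⟩ := Ideal.Quotient.mk_surjective x
    have hmod : Ideal.Quotient.mk J f = Ideal.Quotient.mk J (f %ₘ p) := by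
      refine Ideal.Quotient.eq.mpr ?_
      have : f - f %ₘ p = p * (f /ₘ p) := by
        rw [Polynomial.modByMonic_eq_sub_mul_div f p, sub_sub_cancel]
      rw [this]
      exact J.mul_mem_right _ hpJ
    rw [hmod]
    rcases eq_or_ne (f %ₘ p) 0 with h0 | h0
    · rw [h0, map_zero]; exact Submodule.zero_mem _
    have hrn : (f %ₘ p).natDegree < n := by
      rw [Polynomial.natDegree_lt_iff_degree_lt h0]
      refine lt_of_lt_of_le (Polynomial.degree_modByMonic_lt f hpm) ?_
      exact le_trans Polynomial.degree_le_natDegree (by exact_mod_cast hpd)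
    rw [hmksum _ n hrn]
    exact Submodule.sum_mem _ fun i _ =>
      Submodule.smul_mem _ _ (Submodule.subset_span ⟨i, rfl⟩)
  -- key lemma (Cayley–Hamilton)
  have hkey : ∀ (n : ℕ) (t : Finset (Polynomial A ⧸ J)), t.card ≤ n →
      Submodule.span A (t : Set (Polynomial A ⧸ J)) = ⊤ →
      ∃ p ∈ J, p.Monic ∧ p.natDegree ≤ n := by
    intro n t htc hts
    rcases subsingleton_or_nontrivial A with hA | hA
    · exact ⟨0, J.zero_mem, Polynomial.monic_of_subsingleton _, by simp⟩
    set b : Fin n → Polynomial A ⧸ J :=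
      fun i => if h : (i : ℕ) < t.card then ((t.equivFin.symm ⟨i, h⟩ : t) : Polynomial A ⧸ J)
        else 0 with hbdef
    have hb : Submodule.span A (Set.range b) = ⊤ := by
      rw [eq_top_iff, ← hts]
      refine Submodule.span_mono ?_
      intro x hx
      refine ⟨⟨(t.equivFin ⟨x, hx⟩ : ℕ), lt_of_lt_of_le (t.equivFin ⟨x, hx⟩).2 htc⟩, ?_⟩
      rw [hbdef]
      simp
    obtain ⟨M, hM, -⟩ := Matrix.isRepresentation.toEnd_exists_mem_ideal A b hb
      (Algebra.lmul A (Polynomial A ⧸ J) (Ideal.Quotient.mk J Polynomial.X)) ⊤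
      (le_trans le_top (Submodule.top_smul (⊤ : Submodule A (Polynomial A ⧸ J))).ge)
    have h0 : Polynomial.aeval
        (Algebra.lmul A (Polynomial A ⧸ J) (Ideal.Quotient.mk J Polynomial.X)) M.1.charpoly
          = 0 := by
      rw [← hM, Polynomial.aeval_algHom_apply, ← map_zero (Matrix.isRepresentation.toEnd A b hb)]
      congr 1
      ext1
      rw [Polynomial.aeval_subalgebra_coe, Matrix.aeval_self_charpoly, Subalgebra.coe_zero]
    rw [Polynomial.aeval_algHom_apply] at h0
    have h2 : Polynomial.aeval (Ideal.Quotient.mk J Polynomial.X) M.1.charpoly = 0 := by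
      have := congrArg (fun g : Module.End A (Polynomial A ⧸ J) => g 1) h0
      simpa using this
    rw [haev] at h2
    exact ⟨M.1.charpoly, Ideal.Quotient.eq_zero_iff_mem.mp h2, M.1.charpoly_monic,
      by rw [Matrix.charpoly_natDegree_eq_dim]; simp⟩
  -- part (b2)
  have hb2 : ∀ p : Polynomial A, p.Monic → J = Ideal.span {p} →
      ∃ b : Module.Basis (Fin p.natDegree) A (Polynomial A ⧸ J),
        ∀ i, b i = (Ideal.Quotient.mk J Polynomial.X) ^ (i : ℕ) := by
    intro p hp hJ
    subst hJ
    exact ⟨(AdjoinRoot.powerBasis' hp).basis, fun i => (AdjoinRoot.powerBasis' hp).basis_eq_pow i⟩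
  refine ⟨?_, hgen, ?_, ?_, hb2⟩
  · intro n
    constructor
    · rintro ⟨t, htc, hts⟩
      exact hkey n t htc hts
    · intro h
      refine ⟨Finset.univ.image fun i : Fin n => (Ideal.Quotient.mk J Polynomial.X) ^ (i : ℕ),
        le_trans Finset.card_image_le (by simp), ?_⟩
      rw [Finset.coe_image, Finset.coe_univ, Set.image_univ]
      exact hgen n h
  · constructor
    · intro hfin
      obtain ⟨t, ht⟩ := hfin.fg_top
      obtain ⟨p, hpJ, hpm, -⟩ := hkey t.card t le_rfl ht
      exact ⟨p, hpJ, hpm⟩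
    · rintro ⟨p, hpJ, hpm⟩
      refine ⟨⟨Finset.univ.image fun i : Fin p.natDegree =>
        (Ideal.Quotient.mk J Polynomial.X) ^ (i : ℕ), ?_⟩⟩
      rw [Finset.coe_image, Finset.coe_univ, Set.image_univ]
      exact hgen p.natDegree ⟨p, hpJ, hpm, le_rfl⟩
  · constructor
    · rintro ⟨hfin, hfree⟩
      haveI := hfin
      haveI := hfree
      rcases subsingleton_or_nontrivial A with hA | hA
      · have hJtop : J = ⊤ := eq_top_iff.mpr fun x _ => by
          rw [Subsingleton.elim x (0 : Polynomial A)]; exact J.zero_mem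
        exact ⟨1, Polynomial.monic_one, by rw [hJtop, Ideal.span_singleton_one]⟩
      set p := LinearMap.charpoly
        (Algebra.lmul A (Polynomial A ⧸ J) (Ideal.Quotient.mk J Polynomial.X)) with hpdef
      have hpm : p.Monic := LinearMap.charpoly_monic _
      have hpd : p.natDegree = Module.finrank A (Polynomial A ⧸ J) :=
        LinearMap.charpoly_natDegree _
      have hpJ : p ∈ J := by
        have h0 : Polynomial.aeval
            (Algebra.lmul A (Polynomial A ⧸ J) (Ideal.Quotient.mk J Polynomial.X)) p = 0 :=
          LinearMap.aeval_self_charpoly _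
        rw [Polynomial.aeval_algHom_apply] at h0
        have h2 : Polynomial.aeval (Ideal.Quotient.mk J Polynomial.X) p = 0 := by
          have := congrArg (fun g : Module.End A (Polynomial A ⧸ J) => g 1) h0
          simpa using this
        rw [haev] at h2
        exact Ideal.Quotient.eq_zero_iff_mem.mp h2
      set n := Module.finrank A (Polynomial A ⧸ J) with hn
      have hspan : Submodule.span A
          (Set.range fun i : Fin n => (Ideal.Quotient.mk J Polynomial.X) ^ (i : ℕ)) = ⊤ :=
        hgen n ⟨p, hpJ, hpm, hpd.le⟩
      set T := Fintype.linearCombination A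
        (fun i : Fin n => (Ideal.Quotient.mk J Polynomial.X) ^ (i : ℕ)) with hT
      have hTsurj : Function.Surjective T := by
        rw [← LinearMap.range_eq_top, hT, Fintype.range_linearCombination]
        exact hspan
      have hcard : Fintype.card (Module.Free.ChooseBasisIndex A (Polynomial A ⧸ J)) = n :=
        (Module.finrank_eq_card_chooseBasisIndex A (Polynomial A ⧸ J)).symm
      set e := ((Module.Free.chooseBasis A (Polynomial A ⧸ J)).reindex
        (Fintype.equivFinOfCardEq hcard)).equivFun with he
      have hendo : Function.Injective (e.toLinearMap ∘ₗ T) :=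
        OrzechProperty.injective_of_surjective_endomorphism _
          (e.surjective.comp hTsurj)
      have hTinj : Function.Injective T := fun x y h => by
        have : (e.toLinearMap ∘ₗ T) x = (e.toLinearMap ∘ₗ T) y := by
          simp [LinearMap.comp_apply, h]
        exact hendo this
      have hli : LinearIndependent A
          (fun i : Fin n => (Ideal.Quotient.mk J Polynomial.X) ^ (i : ℕ)) := by
        rw [Fintype.linearIndependent_iff]
        intro g hg i
        have h1 : T g = T 0 := by
          rw [hT, Fintype.linearCombination_apply, map_zero]
          exact hg
        have := hTinj h1
        simp [this]
      refine ⟨p, hpm, le_antisymm ?_ (Ideal.span_le.mpr (Set.singleton_subset_iff.mpr hpJ))⟩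
      intro f hf
      have hr0 : Ideal.Quotient.mk J (f %ₘ p) = 0 := by
        rw [Polynomial.modByMonic_eq_sub_mul_div f p, map_sub, map_mul,
          Ideal.Quotient.eq_zero_iff_mem.mpr hf, Ideal.Quotient.eq_zero_iff_mem.mpr hpJ,
          zero_mul, sub_zero]
      have hrzero : f %ₘ p = 0 := by
        rcases eq_or_ne (f %ₘ p) 0 with h0 | h0
        · exact h0
        have hrn : (f %ₘ p).natDegree < n := by
          rw [Polynomial.natDegree_lt_iff_degree_lt h0]
          have hd : p.degree = (n : ℕ) := by
            rw [Polynomial.degree_eq_natDegree hpm.ne_zero, hpd, hn]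
          exact hd ▸ Polynomial.degree_modByMonic_lt f hpm
        have hsum : ∑ i : Fin n,
            (f %ₘ p).coeff (i : ℕ) • (Ideal.Quotient.mk J Polynomial.X) ^ (i : ℕ) = 0 := by
          rw [← hmksum _ n hrn]
          exact hr0
        have hcoeff := Fintype.linearIndependent_iff.mp hli
          (fun i : Fin n => (f %ₘ p).coeff (i : ℕ)) hsum
        refine Polynomial.ext fun k => ?_
        rw [Polynomial.coeff_zero]
        by_cases hk : k < n
        · exact hcoeff ⟨k, hk⟩
        · exact Polynomial.coeff_eq_zero_of_natDegree_lt (lt_of_lt_of_le hrn (not_lt.mp hk))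
      have hdvd : f = p * (f /ₘ p) := by
        have h := Polynomial.modByMonic_eq_sub_mul_div f p
        rw [hrzero] at h
        exact sub_eq_zero.mp h.symm
      exact Ideal.mem_span_singleton.mpr ⟨f /ₘ p, hdvd⟩
    · rintro ⟨p, hpm, hJp⟩
      obtain ⟨b, -⟩ := hb2 p hpm hJp
      exact ⟨Module.Finite.of_basis b, Module.Free.of_basis b⟩
end

section
/- (Core of the geometric delineability of intersections.) Let n ∈ ℕ, P = MvPolynomial (Fin n) ℝ, let f, g ∈ P[X] be monic in X, and let h ∈ P[X]. Let S ⊆ ℝ^n be connected in the Euclidean topology. Assume: (i) for every a ∈ S, every z ∈ ℂ with g(a; z) = 0 satisfies f(a; z) = 0 (the solutions of g pointwise form a subset of the solutions of f); and (ii) the number of distinct z ∈ ℂ with f(a; z) = 0 and h(a; z) ≠ 0 is constant as a ranges over S. Then the number of distinct z ∈ ℂ with g(a; z) = 0 and h(a; z) ≠ 0 is also constant as a ranges over S. -/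
open Polynomial Metric Set Filter

noncomputable def cpoly {n : ℕ} (p : Polynomial (MvPolynomial (Fin n) ℝ))
    (a : Fin n → ℝ) : Polynomial ℂ :=
  (evalAtPoint p a).map (algebraMap ℝ ℂ)

lemma cpoly_coeff {n : ℕ} (p : Polynomial (MvPolynomial (Fin n) ℝ)) (a : Fin n → ℝ) (i : ℕ) :
    (cpoly p a).coeff i = ((MvPolynomial.eval a (p.coeff i) : ℝ) : ℂ) := by
  simp [cpoly, evalAtPoint, Polynomial.coeff_map, Complex.coe_algebraMap]

lemma cpoly_monic {n : ℕ} {p : Polynomial (MvPolynomial (Fin n) ℝ)} (hp : p.Monic)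
    (a : Fin n → ℝ) : (cpoly p a).Monic :=
  (hp.map (MvPolynomial.eval a)).map (algebraMap ℝ ℂ)

lemma cpoly_natDegree {n : ℕ} {p : Polynomial (MvPolynomial (Fin n) ℝ)} (hp : p.Monic)
    (a : Fin n → ℝ) : (cpoly p a).natDegree = p.natDegree := by
  rw [cpoly, evalAtPoint, (hp.map (MvPolynomial.eval a)).natDegree_map,
    hp.natDegree_map]

lemma cpoly_natDegree_le {n : ℕ} (p : Polynomial (MvPolynomial (Fin n) ℝ))
    (a : Fin n → ℝ) : (cpoly p a).natDegree ≤ p.natDegree :=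
  le_trans Polynomial.natDegree_map_le Polynomial.natDegree_map_le

lemma norm_eval_le (q : Polynomial ℂ) (D : ℕ) (hD : q.natDegree < D + 1) (z : ℂ) (M : ℝ)
    (hz : ‖z‖ ≤ M) :
    ‖q.eval z‖ ≤ ∑ i ∈ Finset.range (D + 1), ‖q.coeff i‖ * M ^ i := by
  have hM : 0 ≤ M := le_trans (norm_nonneg z) hz
  rw [Polynomial.eval_eq_sum_range' hD]
  refine (norm_sum_le _ _).trans (Finset.sum_le_sum ?_)
  intro i _
  rw [norm_mul, norm_pow]
  gcongr

lemma pow_card_le_norm_prod (s : Multiset ℂ) (ε : ℝ) (hε : 0 ≤ ε)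
    (h : ∀ x ∈ s, ε ≤ ‖x‖) : ε ^ Multiset.card s ≤ ‖s.prod‖ := by
  induction s using Multiset.induction_on with
  | empty => simp
  | cons a s ih =>
    have ha := h a (Multiset.mem_cons_self a s)
    have hs : ∀ x ∈ s, ε ≤ ‖x‖ := fun x hx => h x (Multiset.mem_cons_of_mem hx)
    rw [Multiset.card_cons, Multiset.prod_cons, pow_succ', norm_mul]
    exact mul_le_mul ha (ih hs) (pow_nonneg hε _) (le_trans hε ha)

lemma exists_root_near (p : Polynomial ℂ) (hp : p.Monic) (z : ℂ) (ε : ℝ) (hε : 0 < ε)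
    (hlt : ‖p.eval z‖ < ε ^ p.natDegree) : ∃ r, p.IsRoot r ∧ dist z r < ε := by
  by_contra hcon
  push_neg at hcon
  have hsp : p.Splits := IsAlgClosed.splits p
  have hcard : Multiset.card p.roots = p.natDegree := (Polynomial.splits_iff_card_roots).mp hsp
  have heq := hsp.eq_prod_roots_of_monic hp
  have : ε ^ p.natDegree ≤ ‖p.eval z‖ := by
    conv_rhs => rw [heq]
    rw [Polynomial.eval_multiset_prod, Multiset.map_map]
    have : ∀ x ∈ p.roots.map (fun r => z - r), ε ≤ ‖x‖ := by
      intro x hx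
      obtain ⟨r, hr, rfl⟩ := Multiset.mem_map.mp hx
      have : p.IsRoot r := Polynomial.isRoot_of_mem_roots hr
      simpa [Complex.dist_eq] using hcon r this
    have h2 := pow_card_le_norm_prod _ ε hε.le this
    rw [Multiset.card_map, hcard] at h2
    simpa using h2
  exact absurd hlt (not_lt.mpr this)

lemma norm_root_le (p : Polynomial ℂ) (hp : p.Monic) (r : ℂ) (hr : p.IsRoot r) (B : ℝ)
    (hB : ∑ i ∈ Finset.range p.natDegree, ‖p.coeff i‖ ≤ B) : ‖r‖ ≤ max 1 B := by
  rcases le_or_gt ‖r‖ 1 with h1 | h1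
  · exact h1.trans (le_max_left _ _)
  set d := p.natDegree with hd
  have hd0 : d ≠ 0 := by
    intro h0
    have : p = 1 := hp.natDegree_eq_zero.mp h0
    rw [Polynomial.IsRoot, this] at hr
    simp at hr
  have heval := hr
  rw [Polynomial.IsRoot, Polynomial.eval_eq_sum_range' (lt_add_one d)] at heval
  rw [Finset.sum_range_succ] at heval
  have hlead : p.coeff d = 1 := hp.coeff_natDegree
  rw [hlead, one_mul] at heval
  have hrd : r ^ d = -∑ i ∈ Finset.range d, p.coeff i * r ^ i := by linear_combination heval
  have hnorm : ‖r‖ ^ d ≤ B * ‖r‖ ^ (d - 1) := by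
    calc ‖r‖ ^ d = ‖r ^ d‖ := (norm_pow r d).symm
    _ = ‖∑ i ∈ Finset.range d, p.coeff i * r ^ i‖ := by rw [hrd, norm_neg]
    _ ≤ ∑ i ∈ Finset.range d, ‖p.coeff i‖ * ‖r‖ ^ i := by
        refine (norm_sum_le _ _).trans (Finset.sum_le_sum ?_)
        intro i _; rw [norm_mul, norm_pow]
    _ ≤ ∑ i ∈ Finset.range d, ‖p.coeff i‖ * ‖r‖ ^ (d - 1) := by
        refine Finset.sum_le_sum ?_
        intro i hi
        have : i ≤ d - 1 := by
          have := Finset.mem_range.mp hi; omega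
        exact mul_le_mul_of_nonneg_left (pow_le_pow_right₀ h1.le this) (norm_nonneg _)
    _ = (∑ i ∈ Finset.range d, ‖p.coeff i‖) * ‖r‖ ^ (d - 1) := by
        rw [Finset.sum_mul]
    _ ≤ B * ‖r‖ ^ (d - 1) := by
        exact mul_le_mul_of_nonneg_right hB (pow_nonneg (norm_nonneg _) _)
  have hpow : ‖r‖ ^ d = ‖r‖ * ‖r‖ ^ (d - 1) := by
    rw [← pow_succ']
    congr 1
    omega
  rw [hpow] at hnorm
  have : ‖r‖ ≤ B := le_of_mul_le_mul_right hnorm (pow_pos (lt_trans one_pos h1) _)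
  exact this.trans (le_max_right _ _)

lemma exists_pos_forall_lt (s : Set ℝ) (hfin : s.Finite) (hpos : ∀ x ∈ s, 0 < x) :
    ∃ ε : ℝ, 0 < ε ∧ ε ≤ 1 / 2 ∧ ∀ x ∈ s, ε < x := by
  set t := insert (1 : ℝ) s with ht
  have htfin : t.Finite := hfin.insert 1
  have htne : t.Nonempty := ⟨1, Set.mem_insert 1 s⟩
  have hmem : sInf t ∈ t := htne.csInf_mem htfin
  have hmpos : 0 < sInf t := by
    rcases hmem with h | h
    · rw [h]; exact one_pos
    · exact hpos _ h
  refine ⟨sInf t / 2, by linarith, ?_, ?_⟩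
  · have : sInf t ≤ 1 := csInf_le htfin.bddBelow (Set.mem_insert 1 s)
    linarith
  · intro x hx
    have : sInf t ≤ x := csInf_le htfin.bddBelow (Set.mem_insert_of_mem 1 hx)
    linarith

/-- Bound on the difference of evaluations of `cpoly p` at two parameter points. -/
lemma cpoly_eval_sub_le {n : ℕ} (p : Polynomial (MvPolynomial (Fin n) ℝ))
    (a a₀ : Fin n → ℝ) (z : ℂ) (M : ℝ) (hz : ‖z‖ ≤ M) :
    ‖(cpoly p a).eval z - (cpoly p a₀).eval z‖ ≤
      ∑ i ∈ Finset.range (p.natDegree + 1),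
        ‖MvPolynomial.eval a (p.coeff i) - MvPolynomial.eval a₀ (p.coeff i)‖ * M ^ i := by
  set q := cpoly p a - cpoly p a₀ with hq
  have hdeg : q.natDegree < p.natDegree + 1 := by
    have h3 : q.natDegree ≤ max (cpoly p a).natDegree (cpoly p a₀).natDegree := by
      rw [hq]; exact Polynomial.natDegree_sub_le _ _
    have h4 := max_le (cpoly_natDegree_le p a) (cpoly_natDegree_le p a₀)
    exact lt_of_le_of_lt (h3.trans h4) (lt_add_one _)
  have heval : (cpoly p a).eval z - (cpoly p a₀).eval z = q.eval z := by
    rw [hq, Polynomial.eval_sub]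
  rw [heval]
  refine (norm_eval_le q p.natDegree hdeg z M hz).trans (le_of_eq ?_)
  refine Finset.sum_congr rfl ?_
  intro i _
  congr 1
  rw [hq, Polynomial.coeff_sub, cpoly_coeff, cpoly_coeff, ← Complex.ofReal_sub,
    Complex.norm_real]

lemma continuous_coeff_sum {n : ℕ} (p : Polynomial (MvPolynomial (Fin n) ℝ))
    (a₀ : Fin n → ℝ) (D : ℕ) (M : ℝ) :
    Continuous fun a : Fin n → ℝ => ∑ i ∈ Finset.range D,
      ‖MvPolynomial.eval a (p.coeff i) - MvPolynomial.eval a₀ (p.coeff i)‖ * M ^ i := by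
  refine continuous_finset_sum _ ?_
  intro i _
  exact (((MvPolynomial.continuous_eval _).sub continuous_const).norm).mul continuous_const

lemma rootsNear {n : ℕ} (p : Polynomial (MvPolynomial (Fin n) ℝ)) (hp : p.Monic)
    (a₀ : Fin n → ℝ) (ε : ℝ) (hε : 0 < ε) :
    ∀ᶠ a in nhds a₀,
      (∀ z, (cpoly p a).IsRoot z → ∃ z₀, (cpoly p a₀).IsRoot z₀ ∧ dist z z₀ < ε) ∧
      (∀ z₀, (cpoly p a₀).IsRoot z₀ → ∃ z, (cpoly p a).IsRoot z ∧ dist z₀ z < ε) := by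
  set d := p.natDegree with hd
  set B : ℝ := (∑ i ∈ Finset.range d, ‖MvPolynomial.eval a₀ (p.coeff i)‖) + 1 with hB
  set M : ℝ := max 1 B with hM
  have hsum_cont : Continuous fun a : Fin n → ℝ =>
      ∑ i ∈ Finset.range d, ‖MvPolynomial.eval a (p.coeff i)‖ := by
    refine continuous_finset_sum _ ?_
    intro i _
    exact (MvPolynomial.continuous_eval _).norm
  have E1 : ∀ᶠ a in nhds a₀, (∑ i ∈ Finset.range d, ‖MvPolynomial.eval a (p.coeff i)‖) < B := by
    have : (∑ i ∈ Finset.range d, ‖MvPolynomial.eval a₀ (p.coeff i)‖) < B := by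
      rw [hB]; linarith
    exact hsum_cont.continuousAt.eventually_lt continuousAt_const this
  have E2 : ∀ᶠ a in nhds a₀, (∑ i ∈ Finset.range (d + 1),
      ‖MvPolynomial.eval a (p.coeff i) - MvPolynomial.eval a₀ (p.coeff i)‖ * M ^ i) < ε ^ d := by
    have hc := continuous_coeff_sum p a₀ (d + 1) M
    have h0 : (∑ i ∈ Finset.range (d + 1),
        ‖MvPolynomial.eval a₀ (p.coeff i) - MvPolynomial.eval a₀ (p.coeff i)‖ * M ^ i) < ε ^ d := by
      simp [pow_pos hε]
    exact hc.continuousAt.eventually_lt continuousAt_const h0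
  filter_upwards [E1, E2] with a h1 h2
  have hma : (cpoly p a).Monic := cpoly_monic hp a
  have hma₀ : (cpoly p a₀).Monic := cpoly_monic hp a₀
  have hda : (cpoly p a).natDegree = d := cpoly_natDegree hp a
  have hda₀ : (cpoly p a₀).natDegree = d := cpoly_natDegree hp a₀
  have hcoeff_sum : ∀ b : Fin n → ℝ, ∑ i ∈ Finset.range d, ‖(cpoly p b).coeff i‖ =
      ∑ i ∈ Finset.range d, ‖MvPolynomial.eval b (p.coeff i)‖ := by
    intro b
    refine Finset.sum_congr rfl ?_
    intro i _
    rw [cpoly_coeff, Complex.norm_real]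
  have hbound : ∀ r, (cpoly p a).IsRoot r → ‖r‖ ≤ M := by
    intro r hr
    refine norm_root_le _ hma r hr B ?_
    rw [hda, hcoeff_sum]
    exact h1.le
  have hbound₀ : ∀ r, (cpoly p a₀).IsRoot r → ‖r‖ ≤ M := by
    intro r hr
    refine norm_root_le _ hma₀ r hr B ?_
    rw [hda₀, hcoeff_sum, hB]
    linarith
  constructor
  · intro z hz
    have hzM := hbound z hz
    have hlt : ‖(cpoly p a₀).eval z‖ < ε ^ (cpoly p a₀).natDegree := by
      rw [hda₀]
      have : ‖(cpoly p a₀).eval z‖ = ‖(cpoly p a).eval z - (cpoly p a₀).eval z‖ := by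
        rw [hz.eq_zero, zero_sub, norm_neg]
      rw [this]
      exact lt_of_le_of_lt (cpoly_eval_sub_le p a a₀ z M hzM) h2
    obtain ⟨r, hr, hdr⟩ := exists_root_near _ hma₀ z ε hε hlt
    exact ⟨r, hr, hdr⟩
  · intro z₀ hz₀
    have hzM := hbound₀ z₀ hz₀
    have hlt : ‖(cpoly p a).eval z₀‖ < ε ^ (cpoly p a).natDegree := by
      rw [hda]
      have : ‖(cpoly p a).eval z₀‖ = ‖(cpoly p a).eval z₀ - (cpoly p a₀).eval z₀‖ := by
        rw [hz₀.eq_zero, sub_zero]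
      rw [this]
      exact lt_of_le_of_lt (cpoly_eval_sub_le p a a₀ z₀ M hzM) h2
    obtain ⟨r, hr, hdr⟩ := exists_root_near _ hma z₀ ε hε hlt
    exact ⟨r, hr, hdr⟩

lemma nonroot_persist {n : ℕ} (h : Polynomial (MvPolynomial (Fin n) ℝ)) (a₀ : Fin n → ℝ)
    (z₀ : ℂ) (ε : ℝ) (hε : 0 < ε)
    (hno : ∀ z ∈ Metric.closedBall z₀ ε, ¬ (cpoly h a₀).IsRoot z) :
    ∀ᶠ a in nhds a₀, ∀ z ∈ Metric.closedBall z₀ ε, ¬ (cpoly h a).IsRoot z := by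
  have hK : IsCompact (Metric.closedBall z₀ ε) := isCompact_closedBall z₀ ε
  have hKne : (Metric.closedBall z₀ ε).Nonempty := ⟨z₀, Metric.mem_closedBall_self hε.le⟩
  have hcont : ContinuousOn (fun z => ‖(cpoly h a₀).eval z‖) (Metric.closedBall z₀ ε) :=
    ((cpoly h a₀).continuous.norm).continuousOn
  obtain ⟨zm, hzm, hmin⟩ := hK.exists_isMinOn hKne hcont
  set m : ℝ := ‖(cpoly h a₀).eval zm‖ with hm
  have hmpos : 0 < m := by
    rw [hm]
    exact norm_pos_iff.mpr (hno zm hzm)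
  have E : ∀ᶠ a in nhds a₀, (∑ i ∈ Finset.range (h.natDegree + 1),
      ‖MvPolynomial.eval a (h.coeff i) - MvPolynomial.eval a₀ (h.coeff i)‖ * (‖z₀‖ + ε) ^ i)
        < m := by
    have hc := continuous_coeff_sum h a₀ (h.natDegree + 1) (‖z₀‖ + ε)
    have h0 : (∑ i ∈ Finset.range (h.natDegree + 1),
        ‖MvPolynomial.eval a₀ (h.coeff i) - MvPolynomial.eval a₀ (h.coeff i)‖ * (‖z₀‖ + ε) ^ i)
          < m := by simpa using hmpos
    exact hc.continuousAt.eventually_lt continuousAt_const h0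
  filter_upwards [E] with a hE z hzK hroot
  have hzM : ‖z‖ ≤ ‖z₀‖ + ε := by
    have : dist z z₀ ≤ ε := Metric.mem_closedBall.mp hzK
    calc ‖z‖ ≤ ‖z₀‖ + dist z z₀ := by
          rw [Complex.dist_eq]
          calc ‖z‖ = ‖z₀ + (z - z₀)‖ := by ring_nf
          _ ≤ ‖z₀‖ + ‖z - z₀‖ := norm_add_le _ _
    _ ≤ ‖z₀‖ + ε := by linarith
  have hlow : m ≤ ‖(cpoly h a₀).eval z‖ := hmin hzK
  have : ‖(cpoly h a₀).eval z‖ = ‖(cpoly h a).eval z - (cpoly h a₀).eval z‖ := by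
    rw [hroot.eq_zero, zero_sub, norm_neg]
  rw [this] at hlow
  exact absurd (lt_of_le_of_lt (cpoly_eval_sub_le h a a₀ z (‖z₀‖ + ε) hzM) hE) (not_lt.mpr hlow)

lemma ncard_rootSet {n : ℕ} (p h' : Polynomial (MvPolynomial (Fin n) ℝ)) (hp : p.Monic)
    (a : Fin n → ℝ) :
    {z : ℂ | (cpoly p a).IsRoot z ∧ ¬ (cpoly h' a).IsRoot z}.ncard =
      ((cpoly p a).roots.toFinset.filter fun z => ¬ (cpoly h' a).IsRoot z).card := by
  have hne : cpoly p a ≠ 0 := (cpoly_monic hp a).ne_zero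
  have hset : {z : ℂ | (cpoly p a).IsRoot z ∧ ¬ (cpoly h' a).IsRoot z} =
      ↑((cpoly p a).roots.toFinset.filter fun z => ¬ (cpoly h' a).IsRoot z) := by
    ext z
    simp [Polynomial.mem_roots', hne, and_comm]
  rw [hset, Set.ncard_coe_finset]

lemma key_local {n : ℕ} (f g h : Polynomial (MvPolynomial (Fin n) ℝ))
    (hf : f.Monic) (hg : g.Monic) (S : Set (Fin n → ℝ))
    (hsub : ∀ a ∈ S, ∀ z : ℂ, (cpoly g a).IsRoot z → (cpoly f a).IsRoot z)
    (hconst : ∀ a ∈ S, ∀ a' ∈ S,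
      {z : ℂ | (cpoly f a).IsRoot z ∧ ¬ (cpoly h a).IsRoot z}.ncard =
        {z : ℂ | (cpoly f a').IsRoot z ∧ ¬ (cpoly h a').IsRoot z}.ncard)
    (a₀ : Fin n → ℝ) (ha₀ : a₀ ∈ S) :
    ∀ᶠ a in nhds a₀, a ∈ S →
      {z : ℂ | (cpoly g a).IsRoot z ∧ ¬ (cpoly h a).IsRoot z}.ncard =
        {z : ℂ | (cpoly g a₀).IsRoot z ∧ ¬ (cpoly h a₀).IsRoot z}.ncard := by
  classical
  have hfne : ∀ b, cpoly f b ≠ 0 := fun b => (cpoly_monic hf b).ne_zero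
  have hgne : ∀ b, cpoly g b ≠ 0 := fun b => (cpoly_monic hg b).ne_zero
  set Rf : Finset ℂ := (cpoly f a₀).roots.toFinset with hRf
  set Gf : Finset ℂ := Rf.filter (fun z => ¬ (cpoly h a₀).IsRoot z) with hGf
  set Gg : Finset ℂ := ((cpoly g a₀).roots.toFinset).filter
    (fun z => ¬ (cpoly h a₀).IsRoot z) with hGg
  have hmemRf : ∀ z, z ∈ Rf ↔ (cpoly f a₀).IsRoot z := by
    intro z; rw [hRf]; simp [Polynomial.mem_roots', hfne a₀]
  have hmemGf : ∀ z, z ∈ Gf ↔ (cpoly f a₀).IsRoot z ∧ ¬ (cpoly h a₀).IsRoot z := by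
    intro z; rw [hGf, Finset.mem_filter, hmemRf]
  have hmemGg : ∀ z, z ∈ Gg ↔ (cpoly g a₀).IsRoot z ∧ ¬ (cpoly h a₀).IsRoot z := by
    intro z; rw [hGg, Finset.mem_filter]
    simp [Polynomial.mem_roots', hgne a₀]
  have hGgGf : Gg ⊆ Gf := by
    intro z hz
    rw [hmemGg] at hz
    rw [hmemGf]
    exact ⟨hsub a₀ ha₀ z hz.1, hz.2⟩
  -- choice of ε
  set s₁ : Set ℝ := {x | ∃ z₀ ∈ Rf, ∃ z₁ ∈ Rf, z₀ ≠ z₁ ∧ x = dist z₀ z₁ / 2} with hs₁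
  set s₂ : Set ℝ := {x | ∃ z₀ ∈ Gf, ∃ w : ℂ, (cpoly h a₀).IsRoot w ∧ x = dist z₀ w} with hs₂
  have h1fin : s₁.Finite := by
    refine Set.Finite.subset (Set.Finite.image (fun p : ℂ × ℂ => dist p.1 p.2 / 2)
      ((Rf.finite_toSet).prod (Rf.finite_toSet))) ?_
    rintro x ⟨z₀, hz₀, z₁, hz₁, _, rfl⟩
    exact ⟨(z₀, z₁), ⟨hz₀, hz₁⟩, rfl⟩
  have h2fin : s₂.Finite := by
    by_cases H0 : cpoly h a₀ = 0
    · have : s₂ = ∅ := by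
        ext x
        simp only [hs₂, Set.mem_setOf_eq, Set.mem_empty_iff_false, iff_false]
        rintro ⟨z₀, hz₀, w, hw, rfl⟩
        rw [hmemGf] at hz₀
        exact hz₀.2 (by simp [H0, Polynomial.IsRoot])
      rw [this]; exact Set.finite_empty
    · refine Set.Finite.subset (Set.Finite.image (fun p : ℂ × ℂ => dist p.1 p.2)
        ((Gf.finite_toSet).prod (Polynomial.finite_setOf_isRoot H0))) ?_
      rintro x ⟨z₀, hz₀, w, hw, rfl⟩
      exact ⟨(z₀, w), ⟨hz₀, hw⟩, rfl⟩
  have hpos : ∀ x ∈ s₁ ∪ s₂, 0 < x := by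
    rintro x (⟨z₀, _, z₁, _, hne, rfl⟩ | ⟨z₀, hz₀, w, hw, rfl⟩)
    · have : 0 < dist z₀ z₁ := dist_pos.mpr hne
      linarith
    · refine dist_pos.mpr ?_
      rintro rfl
      rw [hmemGf] at hz₀
      exact hz₀.2 hw
  obtain ⟨ε, hε, hε1, hεlt⟩ := exists_pos_forall_lt (s₁ ∪ s₂) (h1fin.union h2fin) hpos
  have hsep : ∀ z₀ ∈ Rf, ∀ z₁ ∈ Rf, z₀ ≠ z₁ → 2 * ε < dist z₀ z₁ := by
    intro z₀ hz₀ z₁ hz₁ hne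
    have hx : dist z₀ z₁ / 2 ∈ s₁ ∪ s₂ := Or.inl ⟨z₀, hz₀, z₁, hz₁, hne, rfl⟩
    have := hεlt _ hx
    linarith
  have hHball : ∀ z₀ ∈ Gf, ∀ z ∈ Metric.closedBall z₀ ε, ¬ (cpoly h a₀).IsRoot z := by
    intro z₀ hz₀ z hz hroot
    have hx : dist z₀ z ∈ s₁ ∪ s₂ := Or.inr ⟨z₀, hz₀, z, hroot, rfl⟩
    have h2 := hεlt _ hx
    have hd : dist z z₀ ≤ ε := Metric.mem_closedBall.mp hz
    rw [dist_comm] at hd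
    linarith
  -- eventual conditions
  have Eh : ∀ᶠ a in nhds a₀, ∀ z₀ ∈ Gf, ∀ z ∈ Metric.closedBall z₀ ε,
      ¬ (cpoly h a).IsRoot z := by
    rw [Filter.eventually_all_finset]
    intro z₀ hz₀
    exact nonroot_persist h a₀ z₀ ε hε (hHball z₀ hz₀)
  filter_upwards [rootsNear f hf a₀ ε hε, rootsNear g hg a₀ ε hε, Eh]
    with a hEf hEg hEh haS
  obtain ⟨hf1, hf2⟩ := hEf
  obtain ⟨hg1, hg2⟩ := hEg
  set countF : Finset ℂ := (cpoly f a).roots.toFinset.filter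
    (fun z => ¬ (cpoly h a).IsRoot z) with hcF
  set countG : Finset ℂ := (cpoly g a).roots.toFinset.filter
    (fun z => ¬ (cpoly h a).IsRoot z) with hcG
  have hmemF : ∀ z, z ∈ countF ↔ (cpoly f a).IsRoot z ∧ ¬ (cpoly h a).IsRoot z := by
    intro z; rw [hcF, Finset.mem_filter]; simp [Polynomial.mem_roots', hfne a]
  have hmemG : ∀ z, z ∈ countG ↔ (cpoly g a).IsRoot z ∧ ¬ (cpoly h a).IsRoot z := by
    intro z; rw [hcG, Finset.mem_filter]; simp [Polynomial.mem_roots', hgne a]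
  have hcardF : countF.card = Gf.card := by
    have hc := hconst a haS a₀ ha₀
    rw [ncard_rootSet f h hf a, ncard_rootSet f h hf a₀] at hc
    exact hc
  -- choice of nearby roots for each good f-root
  have hrt : ∀ z₀ : ℂ, z₀ ∈ Gf → ∃ z, z ∈ countF ∧ dist z₀ z < ε := by
    intro z₀ hz₀
    obtain ⟨z, hzroot, hdz⟩ := hf2 z₀ ((hmemGf z₀).mp hz₀).1
    have hzball : z ∈ Metric.closedBall z₀ ε := by
      rw [Metric.mem_closedBall, dist_comm]
      exact hdz.le
    exact ⟨z, (hmemF z).mpr ⟨hzroot, hEh z₀ hz₀ z hzball⟩, hdz⟩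
  choose rt hrtmem hrtdist using hrt
  have hGfRf : ∀ z₀, z₀ ∈ Gf → z₀ ∈ Rf := by
    intro z₀ hz₀; exact (Finset.mem_filter.mp hz₀).1
  -- injectivity of rt
  have hrtinj : ∀ z₀ (hz₀ : z₀ ∈ Gf) z₁ (hz₁ : z₁ ∈ Gf), rt z₀ hz₀ = rt z₁ hz₁ → z₀ = z₁ := by
    intro z₀ hz₀ z₁ hz₁ heq
    by_contra hne
    have hs := hsep z₀ (hGfRf z₀ hz₀) z₁ (hGfRf z₁ hz₁) hne
    have d1 := hrtdist z₀ hz₀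
    have d2 := hrtdist z₁ hz₁
    have htri : dist z₀ z₁ ≤ dist z₀ (rt z₀ hz₀) + dist (rt z₀ hz₀) z₁ := dist_triangle _ _ _
    rw [heq, dist_comm (rt z₁ hz₁) z₁] at htri
    rw [heq] at d1
    linarith
  -- surjectivity of rt onto countF
  have hrtsurj : ∀ w ∈ countF, ∃ z₀, ∃ hz₀ : z₀ ∈ Gf, w = rt z₀ hz₀ := by
    intro w hw
    set ι : ↥Gf → ↥countF := fun x => ⟨rt x.1 x.2, hrtmem x.1 x.2⟩ with hι
    have hinj : Function.Injective ι := by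
      intro x y hxy
      have := congrArg Subtype.val hxy
      exact Subtype.ext (hrtinj x.1 x.2 y.1 y.2 this)
    have hcards : Fintype.card ↥Gf = Fintype.card ↥countF := by
      rw [Fintype.card_coe, Fintype.card_coe, hcardF]
    have hbij : Function.Bijective ι :=
      (Fintype.bijective_iff_injective_and_card ι).mpr ⟨hinj, hcards⟩
    obtain ⟨x, hx⟩ := hbij.2 ⟨w, hw⟩
    exact ⟨x.1, x.2, (congrArg Subtype.val hx).symm⟩
  have huniq : ∀ w ∈ countF, ∀ z₀, ∀ hz₀ : z₀ ∈ Gf, dist z₀ w < ε → w = rt z₀ hz₀ := by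
    intro w hw z₀ hz₀ hdw
    obtain ⟨z₁, hz₁, rfl⟩ := hrtsurj w hw
    by_cases hxz : z₁ = z₀
    · subst hxz; rfl
    · exfalso
      have hs := hsep z₁ (hGfRf z₁ hz₁) z₀ (hGfRf z₀ hz₀) hxz
      have d1 := hrtdist z₁ hz₁
      have : dist z₁ z₀ ≤ dist z₁ (rt z₁ hz₁) + dist (rt z₁ hz₁) z₀ := dist_triangle _ _ _
      rw [dist_comm (rt z₁ hz₁) z₀] at this
      linarith
  -- the bijection between Gg and countG
  have hcard : Gg.card = countG.card := by
    refine Finset.card_bij (fun z₀ hz₀ => rt z₀ (hGgGf hz₀)) ?_ ?_ ?_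
    · intro z₀ hz₀
      have hz₀g := (hmemGg z₀).mp hz₀
      obtain ⟨w, hwroot, hdw⟩ := hg2 z₀ hz₀g.1
      have hwball : w ∈ Metric.closedBall z₀ ε := by
        rw [Metric.mem_closedBall, dist_comm]; exact hdw.le
      have hwH : ¬ (cpoly h a).IsRoot w := hEh z₀ (hGgGf hz₀) w hwball
      have hwF : w ∈ countF := (hmemF w).mpr ⟨hsub a haS w hwroot, hwH⟩
      have hwrt : w = rt z₀ (hGgGf hz₀) := huniq w hwF z₀ (hGgGf hz₀) hdw
      show rt z₀ (hGgGf hz₀) ∈ countG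
      rw [← hwrt]
      exact (hmemG w).mpr ⟨hwroot, hwH⟩
    · intro z₀ hz₀ z₁ hz₁ heq
      exact hrtinj z₀ (hGgGf hz₀) z₁ (hGgGf hz₁) heq
    · intro w hw
      have hwG := (hmemG w).mp hw
      have hwF : w ∈ countF := (hmemF w).mpr ⟨hsub a haS w hwG.1, hwG.2⟩
      obtain ⟨z₀, hz₀, rfl⟩ := hrtsurj w hwF
      obtain ⟨w₀, hw₀root, hdw₀⟩ := hg1 _ hwG.1
      have hw₀Rf : w₀ ∈ Rf := (hmemRf w₀).mpr (hsub a₀ ha₀ w₀ hw₀root)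
      have hzw : z₀ = w₀ := by
        by_contra hne
        have hs := hsep z₀ (hGfRf z₀ hz₀) w₀ hw₀Rf hne
        have d1 := hrtdist z₀ hz₀
        have : dist z₀ w₀ ≤ dist z₀ (rt z₀ hz₀) + dist (rt z₀ hz₀) w₀ := dist_triangle _ _ _
        linarith
      have hz₀Gg : z₀ ∈ Gg := by
        rw [hmemGg]
        refine ⟨hzw ▸ hw₀root, ((hmemGf z₀).mp hz₀).2⟩
      exact ⟨z₀, hz₀Gg, rfl⟩
  rw [ncard_rootSet g h hg a, ncard_rootSet g h hg a₀]
  rw [← hcG, ← hcard, hGg]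

/-- **Core of the geometric delineability of intersections.**
Let `P = ℝ[x₁,…,xₙ]`, `f, g ∈ P[X]` monic in `X`, `h ∈ P[X]`, and `S ⊆ ℝⁿ` connected.
If for every `a ∈ S` every complex solution of `g(a; ·) = 0` is a solution of
`f(a; ·) = 0`, and the number of distinct `z ∈ ℂ` with `f(a; z) = 0 ∧ h(a; z) ≠ 0` is
constant on `S`, then the number of distinct `z ∈ ℂ` with `g(a; z) = 0 ∧ h(a; z) ≠ 0` is
also constant on `S`. -/
theorem geometric_delineability_of_intersection_core
    (n : ℕ) (f g h : Polynomial (MvPolynomial (Fin n) ℝ))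
    (hf : f.Monic) (hg : g.Monic)
    (S : Set (Fin n → ℝ)) (hconn : IsConnected S)
    (hsub : ∀ a ∈ S, ∀ z : ℂ,
      ((evalAtPoint g a).map (algebraMap ℝ ℂ)).IsRoot z →
        ((evalAtPoint f a).map (algebraMap ℝ ℂ)).IsRoot z)
    (hconst : ∀ a ∈ S, ∀ a' ∈ S,
      {z : ℂ | ((evalAtPoint f a).map (algebraMap ℝ ℂ)).IsRoot z ∧
          ¬ ((evalAtPoint h a).map (algebraMap ℝ ℂ)).IsRoot z}.ncard =
        {z : ℂ | ((evalAtPoint f a').map (algebraMap ℝ ℂ)).IsRoot z ∧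
          ¬ ((evalAtPoint h a').map (algebraMap ℝ ℂ)).IsRoot z}.ncard) :
    ∀ a ∈ S, ∀ a' ∈ S,
      {z : ℂ | ((evalAtPoint g a).map (algebraMap ℝ ℂ)).IsRoot z ∧
          ¬ ((evalAtPoint h a).map (algebraMap ℝ ℂ)).IsRoot z}.ncard =
        {z : ℂ | ((evalAtPoint g a').map (algebraMap ℝ ℂ)).IsRoot z ∧
          ¬ ((evalAtPoint h a').map (algebraMap ℝ ℂ)).IsRoot z}.ncard := by
  classical
  intro a ha a' ha'
  have hsub' : ∀ b ∈ S, ∀ z : ℂ, (cpoly g b).IsRoot z → (cpoly f b).IsRoot z := hsub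
  have hconst' : ∀ b ∈ S, ∀ b' ∈ S,
      {z : ℂ | (cpoly f b).IsRoot z ∧ ¬ (cpoly h b).IsRoot z}.ncard =
        {z : ℂ | (cpoly f b').IsRoot z ∧ ¬ (cpoly h b').IsRoot z}.ncard := hconst
  set N : (Fin n → ℝ) → ℕ :=
    fun b => {z : ℂ | (cpoly g b).IsRoot z ∧ ¬ (cpoly h b).IsRoot z}.ncard with hN
  show N a = N a'
  have key : ∀ b : {b // b ∈ S}, ∃ O : Set (Fin n → ℝ),
      IsOpen O ∧ ↑b ∈ O ∧ ∀ c ∈ O, c ∈ S → N c = N ↑b := by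
    intro b
    have hev := key_local f g h hf hg S hsub' hconst' ↑b b.2
    rw [_root_.eventually_nhds_iff] at hev
    obtain ⟨t, h1, h2, h3⟩ := hev
    exact ⟨t, h2, h3, fun c hc hcS => h1 c hc hcS⟩
  choose O hOopen hOmem hOval using key
  set u : Set (Fin n → ℝ) := ⋃ (b : {b // b ∈ S}) (_ : N ↑b = N a'), O b with hu
  set v : Set (Fin n → ℝ) := ⋃ (b : {b // b ∈ S}) (_ : N ↑b ≠ N a'), O b with hv
  have huo : IsOpen u := isOpen_iUnion fun b => isOpen_iUnion fun _ => hOopen b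
  have hvo : IsOpen v := isOpen_iUnion fun b => isOpen_iUnion fun _ => hOopen b
  have hcover : S ⊆ u ∪ v := by
    intro b hb
    by_cases hb' : N b = N a'
    · exact Or.inl (Set.mem_iUnion.mpr ⟨⟨b, hb⟩, Set.mem_iUnion.mpr ⟨hb', hOmem ⟨b, hb⟩⟩⟩)
    · exact Or.inr (Set.mem_iUnion.mpr ⟨⟨b, hb⟩, Set.mem_iUnion.mpr ⟨hb', hOmem ⟨b, hb⟩⟩⟩)
  by_contra hne
  have hSu : (S ∩ u).Nonempty := by
    refine ⟨a', ha', Set.mem_iUnion.mpr ⟨⟨a', ha'⟩, Set.mem_iUnion.mpr ⟨rfl, hOmem ⟨a', ha'⟩⟩⟩⟩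
  have hSv : (S ∩ v).Nonempty := by
    refine ⟨a, ha, Set.mem_iUnion.mpr ⟨⟨a, ha⟩, Set.mem_iUnion.mpr ⟨hne, hOmem ⟨a, ha⟩⟩⟩⟩
  obtain ⟨x, hxS, hxu, hxv⟩ := hconn.2 u v huo hvo hcover hSu hSv
  obtain ⟨b₁, hb₁⟩ := Set.mem_iUnion.mp hxu
  obtain ⟨hb₁', hxb₁⟩ := Set.mem_iUnion.mp hb₁
  obtain ⟨b₂, hb₂⟩ := Set.mem_iUnion.mp hxv
  obtain ⟨hb₂', hxb₂⟩ := Set.mem_iUnion.mp hb₂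
  have e1 : N x = N ↑b₁ := hOval b₁ x hxb₁ hxS
  have e2 : N x = N ↑b₂ := hOval b₂ x hxb₂ hxS
  exact hb₂' (by rw [← e2, e1, hb₁'])
end

section
/- (Stickelberger's eigenvalue theorem.) Let A be a finite-dimensional commutative ℂ-algebra and f ∈ A. Let L_f : A → A be the ℂ-linear map given by multiplication by f. Then the characteristic polynomial of L_f factors as det(λ·id − L_f) = ∏_φ (λ − φ(f))^{m(φ)}, where the product runs over all ℂ-algebra homomorphisms φ : A → ℂ, and m(φ) is the ℂ-dimension of the localization of A at the prime ideal ker φ. In particular, the set of eigenvalues of L_f is exactly {φ(f) : φ is a ℂ-algebra homomorphism A → ℂ}. -/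
open Polynomial

section StickelbergerAux

open Module

private lemma matrix_charpoly_add_scalar' {n : Type*} [DecidableEq n] [Fintype n]
    {R : Type*} [CommRing R] (M : Matrix n n R) (c : R) :
    (M + c • 1).charpoly = M.charpoly.comp (X - C c) := by
  have haev : ∀ p : R[X], (aeval (X - C c) : R[X] →ₐ[R] R[X]) p = p.comp (X - C c) := by
    intro p
    rw [Polynomial.comp, Polynomial.aeval_def, Polynomial.algebraMap_eq]
  have hmat : (M + c • 1).charmatrix
      = ((aeval (X - C c) : R[X] →ₐ[R] R[X]) : R[X] →+* R[X]).mapMatrix M.charmatrix := by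
    ext i j
    rcases eq_or_ne i j with h | h
    · subst h
      simp only [Matrix.charmatrix_apply_eq, Matrix.add_apply, Matrix.smul_apply,
        Matrix.one_apply_eq, RingHom.mapMatrix_apply, Matrix.map_apply,
        RingHom.coe_coe, map_sub, aeval_X, aeval_C, Polynomial.algebraMap_eq, smul_eq_mul,
        mul_one, C_add]
      ring
    · simp only [Matrix.charmatrix_apply_ne _ _ _ h, Matrix.add_apply, Matrix.smul_apply,
        Matrix.one_apply_ne h, RingHom.mapMatrix_apply, Matrix.map_apply,
        RingHom.coe_coe, map_neg, aeval_C, Polynomial.algebraMap_eq, smul_eq_mul,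
        mul_zero, add_zero]
  rw [Matrix.charpoly, Matrix.charpoly, hmat, ← RingHom.map_det, RingHom.coe_coe, haev]

private lemma end_charpoly_of_sub_nilpotent' {K : Type*} [Field K] {B : Type*} [CommRing B]
    [Algebra K B] [FiniteDimensional K B] {y : B} {c : K}
    (h : IsNilpotent (y - algebraMap K B c)) :
    (LinearMap.mulLeft K y).charpoly = (X - C c) ^ Module.finrank K B := by
  set N : Module.End K B := LinearMap.mulLeft K (y - algebraMap K B c) with hN
  have hNnil : IsNilpotent N := by
    obtain ⟨m, hm⟩ := h
    exact ⟨m, by rw [hN, LinearMap.pow_mulLeft, hm, LinearMap.mulLeft_zero_eq_zero]⟩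
  have hsplit : LinearMap.mulLeft K y = N + algebraMap K (Module.End K B) c := by
    ext x
    simp only [hN, LinearMap.add_apply, LinearMap.mulLeft_apply,
      Module.algebraMap_end_apply, sub_mul, Algebra.smul_def]
    ring
  let b := Module.Free.chooseBasis K B
  have htm : LinearMap.toMatrix b b (LinearMap.mulLeft K y)
      = LinearMap.toMatrix b b N + c • 1 := by
    rw [hsplit, map_add, Module.algebraMap_end_eq_smul_id, map_smul]
    congr 1
    rw [← Module.End.one_eq_id, LinearMap.toMatrix_one]
  rw [← LinearMap.charpoly_toMatrix _ b, htm, matrix_charpoly_add_scalar',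
    LinearMap.charpoly_toMatrix, hNnil.charpoly_eq_X_pow_finrank]
  simp [pow_comp]

private def piFinSuccLEquiv' {K : Type*} [Semiring K] {n : ℕ} (M : Fin (n + 1) → Type*)
    [∀ i, AddCommMonoid (M i)] [∀ i, Module K (M i)] :
    (∀ i, M i) ≃ₗ[K] M 0 × ∀ i : Fin n, M i.succ where
  toFun x := (x 0, fun i => x i.succ)
  invFun p := Fin.cons p.1 p.2
  map_add' x y := rfl
  map_smul' c x := rfl
  left_inv x := by
    funext i
    refine Fin.cases ?_ ?_ i <;> simp
  right_inv p := by
    obtain ⟨a, v⟩ := p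
    simp

private lemma end_charpoly_pi' {K : Type*} [Field K] : ∀ {n : ℕ} (M : Fin n → Type*)
    [∀ i, AddCommGroup (M i)] [∀ i, Module K (M i)] [∀ i, FiniteDimensional K (M i)]
    (g : ∀ i, Module.End K (M i)),
    (LinearMap.pi fun i => (g i) ∘ₗ LinearMap.proj i).charpoly = ∏ i, (g i).charpoly := by
  intro n
  induction n with
  | zero =>
    intro M _ _ _ g
    have : Subsingleton (∀ i : Fin 0, M i) := ⟨fun a b => funext fun i => i.elim0⟩
    rw [Finset.univ_eq_empty, Finset.prod_empty]
    refine ((LinearMap.charpoly_monic _).natDegree_eq_zero).mp ?_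
    rw [LinearMap.charpoly_natDegree]
    exact Module.finrank_zero_of_subsingleton
  | succ n ih =>
    intro M _ _ _ g
    set e := piFinSuccLEquiv' (K := K) M
    have hconj : e.conj (LinearMap.pi fun i => (g i) ∘ₗ LinearMap.proj i)
        = (g 0).prodMap (LinearMap.pi fun i : Fin n => (g i.succ) ∘ₗ LinearMap.proj i) := by
      apply LinearMap.ext
      rintro ⟨a, v⟩
      simp only [LinearEquiv.conj_apply, LinearMap.coe_comp, Function.comp_apply,
        LinearEquiv.coe_coe, LinearMap.prodMap_apply, LinearMap.pi_apply, LinearMap.proj_apply]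
      have hsymm : e.symm (a, v) = Fin.cons a v := rfl
      rw [hsymm]
      refine Prod.ext ?_ ?_
      · show (g 0) (Fin.cons a v 0) = g 0 a
        rw [Fin.cons_zero]
      · funext i
        show (g i.succ) (Fin.cons a v i.succ) = g i.succ (v i)
        rw [Fin.cons_succ]
    rw [← e.charpoly_conj (LinearMap.pi fun i => (g i) ∘ₗ LinearMap.proj i), hconj,
      LinearMap.charpoly_prodMap, ih _ _, Fin.prod_univ_succ]

end StickelbergerAux

/-- **Stickelberger's eigenvalue theorem.**
Let `A` be a finite-dimensional commutative `ℂ`-algebra and `f ∈ A`.  The characteristic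
polynomial of the multiplication map `L_f : A → A` factors as
`∏_φ (λ − φ(f))^{m(φ)}`, the product over all `ℂ`-algebra homomorphisms `φ : A → ℂ`,
where `m(φ)` is the `ℂ`-dimension of the localization of `A` at the prime `ker φ`.
In particular the eigenvalues of `L_f` are exactly the values `φ(f)`. -/
theorem stickelberger_charpoly_factorization
    (A : Type*) [CommRing A] [Algebra ℂ A] [FiniteDimensional ℂ A] (f : A) :
    (LinearMap.mulLeft ℂ f).charpoly =
        (∏ᶠ φ : A →ₐ[ℂ] ℂ,
          haveI : (RingHom.ker φ).IsPrime := RingHom.ker_isPrime φ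
          (X - C (φ f)) ^ Module.finrank ℂ (Localization.AtPrime (RingHom.ker φ))) ∧
      ∀ μ : ℂ, Module.End.HasEigenvalue (LinearMap.mulLeft ℂ f) μ ↔
        ∃ φ : A →ₐ[ℂ] ℂ, φ f = μ := by
  classical
  haveI hart : IsArtinianRing A := isArtinian_of_tower ℂ inferInstance
  obtain ⟨k0, hk0⟩ := IsArtinianRing.isNilpotent_jacobson_bot (R := A)
  set k : ℕ := k0 + 1 with hkdef
  have hkne : k ≠ 0 := Nat.succ_ne_zero _
  have hk : (Ideal.jacobson (⊥ : Ideal A)) ^ k = ⊥ := by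
    rw [hkdef, pow_succ, hk0, zero_mul, Ideal.zero_eq_bot]
  haveI : Finite {I : Ideal A | I.IsMaximal} :=
    (IsArtinianRing.setOfPred_isMaximal_finite A).to_subtype
  letI : Fintype {I : Ideal A | I.IsMaximal} := Fintype.ofFinite _
  set n := Fintype.card {I : Ideal A | I.IsMaximal} with hn
  set eqv : {I : Ideal A | I.IsMaximal} ≃ Fin n := Fintype.equivFin _ with heqv
  set J : Fin n → Ideal A := fun j => ((eqv.symm j : {I : Ideal A | I.IsMaximal}) : Ideal A)
    with hJdef
  have hJmax : ∀ j, (J j).IsMaximal := fun j => (eqv.symm j).2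
  have hJinj : Function.Injective J := fun i j h =>
    eqv.symm.injective (Subtype.coe_injective h)
  have hJsurj : ∀ I : Ideal A, I.IsMaximal → ∃ j, J j = I := by
    intro I hI
    exact ⟨eqv ⟨I, hI⟩, by simp [hJdef]⟩
  set P : Fin n → Ideal A := fun j => (J j) ^ k with hPdef
  have hPleJ : ∀ j, P j ≤ J j := fun j => Ideal.pow_le_self hkne
  have hcop : Pairwise (Function.onFun IsCoprime P) := by
    intro i j hij
    have h1 : J i ⊔ J j = ⊤ :=
      Ideal.IsMaximal.coprime_of_ne (hJmax i) (hJmax j) fun h => hij (hJinj h)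
    exact (Ideal.isCoprime_iff_sup_eq.mpr h1).pow
  -- the product of all the `P j` is zero
  have hprodle : (∏ j, J j) ≤ Ideal.jacobson (⊥ : Ideal A) := by
    rw [Ideal.jacobson]
    refine le_sInf ?_
    rintro M ⟨-, hM⟩
    obtain ⟨j, rfl⟩ := hJsurj M hM
    exact le_trans Ideal.prod_le_inf (Finset.inf_le (Finset.mem_univ j))
  have hPprod_bot : (∏ j, P j) = ⊥ := by
    have h1 : (∏ j, P j) = (∏ j, J j) ^ k := by
      rw [hPdef, Finset.prod_pow]
    have h2 : (∏ j, J j) ^ k ≤ (⊥ : Ideal A) := hk ▸ Ideal.pow_right_mono hprodle k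
    exact le_bot_iff.mp (h1 ▸ h2)
  have hinfle : ∀ s : Finset (Fin n), s.inf P ≤ ∏ j ∈ s, P j := by
    intro s
    induction s using Finset.induction with
    | empty => simp [Ideal.one_eq_top]
    | @insert a s ha ih =>
      rw [Finset.inf_insert, Finset.prod_insert ha]
      have hco : IsCoprime (P a) (∏ j ∈ s, P j) := by
        refine IsCoprime.prod_right fun b hb => ?_
        have hne : J a ≠ J b := fun h => ha (by rw [hJinj h]; exact hb)
        exact (Ideal.isCoprime_iff_sup_eq.mpr
          (Ideal.IsMaximal.coprime_of_ne (hJmax a) (hJmax b) hne)).pow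
      calc P a ⊓ s.inf P ≤ P a ⊓ ∏ j ∈ s, P j := inf_le_inf_left _ ih
        _ = P a * ∏ j ∈ s, P j :=
            (Ideal.mul_eq_inf_of_coprime (Ideal.isCoprime_iff_sup_eq.mp hco)).symm
  have hbot : ∀ x : A, (∀ j, x ∈ P j) → x = 0 := by
    intro x hx
    have hxinf : x ∈ Finset.univ.inf P :=
      Submodule.mem_finsetInf.mpr fun j _ => hx j
    have hxprod : x ∈ (∏ j, P j) := hinfle Finset.univ hxinf
    rw [hPprod_bot] at hxprod
    exact (Submodule.mem_bot A).mp hxprod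
  -- residue algebra homomorphisms
  have hres : ∀ j : Fin n, ∃ φ : A →ₐ[ℂ] ℂ, RingHom.ker φ = J j := by
    intro j
    haveI := hJmax j
    letI : Field (A ⧸ J j) := Ideal.Quotient.field (J j)
    haveI : Algebra.IsIntegral ℂ (A ⧸ J j) := Algebra.IsIntegral.of_finite ℂ _
    have hsurj : Function.Surjective (algebraMap ℂ (A ⧸ J j)) :=
      IsAlgClosed.algebraMap_bijective_of_isIntegral.2
    have hinj : Function.Injective (algebraMap ℂ (A ⧸ J j)) := (algebraMap ℂ _).injective
    let ε : ℂ ≃ₐ[ℂ] (A ⧸ J j) := AlgEquiv.ofBijective (Algebra.ofId ℂ _) ⟨hinj, hsurj⟩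
    refine ⟨(ε.symm : (A ⧸ J j) →ₐ[ℂ] ℂ).comp (Ideal.Quotient.mkₐ ℂ (J j)), ?_⟩
    refine Ideal.ext fun a => ?_
    rw [RingHom.mem_ker]
    show ε.symm (Ideal.Quotient.mkₐ ℂ (J j) a) = 0 ↔ a ∈ J j
    rw [map_eq_zero_iff _ ε.symm.injective, Ideal.Quotient.mkₐ_eq_mk,
      Ideal.Quotient.eq_zero_iff_mem]
  choose ψ hψ using hres
  have halg_ext : ∀ φ χ : A →ₐ[ℂ] ℂ, RingHom.ker φ = RingHom.ker χ → φ = χ := by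
    intro φ χ h
    refine AlgHom.ext fun a => ?_
    have h1 : a - algebraMap ℂ A (χ a) ∈ RingHom.ker χ := by
      simp [RingHom.mem_ker, map_sub, AlgHom.commutes]
    rw [← h, RingHom.mem_ker] at h1
    have h2 : φ a - χ a = 0 := by
      simpa [map_sub, AlgHom.commutes] using h1
    exact sub_eq_zero.mp h2
  have hψinj : Function.Injective ψ := fun i j h =>
    hJinj (by rw [← hψ i, ← hψ j, h])
  have hψsurj : Function.Surjective ψ := by
    intro φ
    have hsurjφ : Function.Surjective φ := fun c => ⟨algebraMap ℂ A c, φ.commutes c⟩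
    have hkmax : (RingHom.ker φ).IsMaximal := RingHom.ker_isMaximal_of_surjective φ hsurjφ
    obtain ⟨j, hj⟩ := hJsurj _ hkmax
    exact ⟨j, halg_ext _ _ (by rw [hψ j, hj])⟩
  have hψbij : Function.Bijective ψ := ⟨hψinj, hψsurj⟩
  -- Chinese remainder : `A` is the product of the `A ⧸ P j`
  set Ψ : A →ₐ[ℂ] ∀ j, A ⧸ P j :=
    Pi.algHom ℂ (fun j => A ⧸ P j) (fun j => Ideal.Quotient.mkₐ ℂ (P j)) with hΨdef
  have hΨapp : ∀ (a : A) (j), Ψ a j = Ideal.Quotient.mk (P j) a := fun a j => rfl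
  have hΨinj : Function.Injective Ψ := by
    refine (injective_iff_map_eq_zero _).mpr fun x hx => ?_
    refine hbot x fun j => ?_
    have h1 : Ψ x j = 0 := by rw [hx]; rfl
    rw [hΨapp] at h1
    exact Ideal.Quotient.eq_zero_iff_mem.mp h1
  have hΨsurj : Function.Surjective Ψ := by
    intro y
    set e0 := Ideal.quotientInfRingEquivPiQuotient P hcop
    obtain ⟨z, hz⟩ := e0.surjective y
    obtain ⟨x, rfl⟩ := Ideal.Quotient.mk_surjective z
    refine ⟨x, ?_⟩
    funext j
    rw [hΨapp, ← hz]
    exact (Ideal.quotientInfToPiQuotient_mk' P x j).symm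
  set E : A ≃ₐ[ℂ] ∀ j, A ⧸ P j := AlgEquiv.ofBijective Ψ ⟨hΨinj, hΨsurj⟩ with hEdef
  have hEapp : ∀ (a : A) (j), E a j = Ideal.Quotient.mk (P j) a := fun a j => rfl
  have hconj : E.toLinearEquiv.conj (LinearMap.mulLeft ℂ f)
      = LinearMap.pi
          (fun j => (LinearMap.mulLeft ℂ (Ideal.Quotient.mk (P j) f)) ∘ₗ LinearMap.proj j) := by
    apply LinearMap.ext
    intro x
    funext j
    simp only [LinearEquiv.conj_apply, LinearMap.coe_comp, Function.comp_apply,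
      LinearEquiv.coe_coe, AlgEquiv.toLinearEquiv_apply, LinearMap.mulLeft_apply,
      LinearMap.pi_apply, LinearMap.proj_apply]
    have h1 : E (f * E.toLinearEquiv.symm x) = E f * E (E.toLinearEquiv.symm x) := map_mul _ _ _
    have h2 : E (E.toLinearEquiv.symm x) = x := E.apply_symm_apply x
    rw [h1, h2]
    rw [Pi.mul_apply, hEapp]
  set m : Fin n → ℕ := fun j => Module.finrank ℂ (A ⧸ P j) with hm
  have hcharj : ∀ j, (LinearMap.mulLeft ℂ (Ideal.Quotient.mk (P j) f)).charpoly
      = (X - C (ψ j f)) ^ m j := by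
    intro j
    apply end_charpoly_of_sub_nilpotent'
    refine ⟨k, ?_⟩
    have hmem : f - algebraMap ℂ A (ψ j f) ∈ J j := by
      rw [← hψ j]
      simp [RingHom.mem_ker, map_sub, AlgHom.commutes]
    have h2 : (f - algebraMap ℂ A (ψ j f)) ^ k ∈ P j := Ideal.pow_mem_pow hmem k
    have h3 : Ideal.Quotient.mk (P j) f - algebraMap ℂ (A ⧸ P j) (ψ j f)
        = Ideal.Quotient.mk (P j) (f - algebraMap ℂ A (ψ j f)) := by
      rw [map_sub, IsScalarTower.algebraMap_apply ℂ A (A ⧸ P j),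
        Ideal.Quotient.algebraMap_eq]
    rw [h3, ← map_pow, Ideal.Quotient.eq_zero_iff_mem]
    exact h2
  have hchar : (LinearMap.mulLeft ℂ f).charpoly = ∏ j, (X - C (ψ j f)) ^ m j := by
    calc (LinearMap.mulLeft ℂ f).charpoly
        = (E.toLinearEquiv.conj (LinearMap.mulLeft ℂ f)).charpoly :=
          (E.toLinearEquiv.charpoly_conj _).symm
      _ = (LinearMap.pi (fun j =>
            (LinearMap.mulLeft ℂ (Ideal.Quotient.mk (P j) f)) ∘ₗ LinearMap.proj j)).charpoly := by
          rw [hconj]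
      _ = ∏ j, (LinearMap.mulLeft ℂ (Ideal.Quotient.mk (P j) f)).charpoly :=
          end_charpoly_pi' _ _
      _ = ∏ j, (X - C (ψ j f)) ^ m j := Finset.prod_congr rfl fun j _ => hcharj j
  -- localizations
  have hloc : ∀ j, ∀ (hpr : (J j).IsPrime),
      Module.finrank ℂ (@Localization.AtPrime A _ (J j) hpr) = m j := by
    intro j hpr
    haveI := hJmax j
    haveI : IsLocalization.AtPrime (A ⧸ P j) (J j) := by
      refine ⟨?_, ?_, ?_⟩
      · rintro ⟨s, hs⟩
        have hsup : Ideal.span {s} ⊔ P j = ⊤ := by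
          by_contra hne
          obtain ⟨M, hMmax, hMle⟩ := Ideal.exists_le_maximal _ hne
          have h1 : J j ≤ M := hMmax.isPrime.le_of_pow_le (le_trans le_sup_right hMle)
          have h2 : J j = M := (hJmax j).eq_of_le hMmax.ne_top h1
          have h3 : s ∈ M := hMle (Ideal.mem_sup_left (Ideal.mem_span_singleton_self s))
          exact hs (h2 ▸ h3)
        obtain ⟨u, hu, v, hv, huv⟩ :=
          Submodule.mem_sup.mp (hsup ▸ Submodule.mem_top : (1 : A) ∈ Ideal.span {s} ⊔ P j)
        obtain ⟨a, rfl⟩ := Ideal.mem_span_singleton'.mp hu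
        rw [Ideal.Quotient.algebraMap_eq]
        refine IsUnit.of_mul_eq_one (Ideal.Quotient.mk (P j) a) ?_
        have hv0 : Ideal.Quotient.mk (P j) v = 0 := Ideal.Quotient.eq_zero_iff_mem.mpr hv
        calc Ideal.Quotient.mk (P j) s * Ideal.Quotient.mk (P j) a
            = Ideal.Quotient.mk (P j) (a * s) := by rw [← map_mul, mul_comm]
          _ = Ideal.Quotient.mk (P j) (a * s) + Ideal.Quotient.mk (P j) v := by
              rw [hv0, add_zero]
          _ = Ideal.Quotient.mk (P j) (a * s + v) := (map_add _ _ _).symm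
          _ = 1 := by rw [huv, map_one]
      · intro z
        obtain ⟨x, rfl⟩ := Ideal.Quotient.mk_surjective z
        exact ⟨(x, 1), by simp⟩
      · intro x y hxy
        have hsup2 : P j ⊔ (Finset.univ.erase j).inf P = ⊤ := by
          by_contra hne
          obtain ⟨M, hMmax, hMle⟩ := Ideal.exists_le_maximal _ hne
          have h1 : J j ≤ M := hMmax.isPrime.le_of_pow_le (le_trans le_sup_left hMle)
          have h1' : J j = M := (hJmax j).eq_of_le hMmax.ne_top h1
          have h2 : (Finset.univ.erase j).inf P ≤ M := le_trans le_sup_right hMle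
          obtain ⟨i, hi_mem, hi_le⟩ := (Ideal.IsPrime.inf_le' hMmax.isPrime).mp h2
          have h3 : J i ≤ M := hMmax.isPrime.le_of_pow_le hi_le
          have h4 : J i = M := (hJmax i).eq_of_le hMmax.ne_top h3
          exact Finset.ne_of_mem_erase hi_mem (hJinj (h4.trans h1'.symm))
        obtain ⟨v, hv, s, hsQ, hvs⟩ :=
          Submodule.mem_sup.mp (hsup2 ▸ Submodule.mem_top :
            (1 : A) ∈ P j ⊔ (Finset.univ.erase j).inf P)
        have hsJ : s ∉ J j := by
          intro hsJ
          have hone : (1 : A) ∈ J j := hvs ▸ add_mem (hPleJ j hv) hsJ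
          exact (hJmax j).ne_top ((Ideal.eq_top_iff_one _).mpr hone)
        refine ⟨⟨s, hsJ⟩, ?_⟩
        have hxy' : x - y ∈ P j := by
          rw [Ideal.Quotient.algebraMap_eq] at hxy
          exact Ideal.Quotient.eq.mp hxy
        have h5 : s * (x - y) ∈ P j := Ideal.mul_mem_left _ _ hxy'
        have h6 : s * (x - y) ∈ (Finset.univ.erase j).inf P := Ideal.mul_mem_right _ _ hsQ
        have h7 : s * (x - y) = 0 := by
          apply hbot
          intro i
          rcases eq_or_ne i j with rfl | hij
          · exact h5
          · exact Submodule.mem_finsetInf.mp h6 i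
              (Finset.mem_erase.mpr ⟨hij, Finset.mem_univ i⟩)
        rw [mul_sub] at h7
        exact sub_eq_zero.mp h7
    let α := IsLocalization.algEquiv (J j).primeCompl
      (Localization.AtPrime (J j)) (A ⧸ P j)
    exact LinearEquiv.finrank_eq (α.toLinearEquiv.restrictScalars ℂ)
  have hm1 : ∀ j, 1 ≤ m j := by
    intro j
    have hPne : P j ≠ ⊤ := by
      intro h
      exact (hJmax j).ne_top (top_le_iff.mp (h ▸ hPleJ j))
    haveI : Nontrivial (A ⧸ P j) := Ideal.Quotient.nontrivial_iff.mpr hPne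
    exact Module.finrank_pos
  letI : Fintype (A →ₐ[ℂ] ℂ) := Fintype.ofBijective ψ hψbij
  have hfr : ∀ (I I' : Ideal A) (h : I = I') (h1 : I.IsPrime) (h2 : I'.IsPrime),
      Module.finrank ℂ (@Localization.AtPrime A _ I h1)
        = Module.finrank ℂ (@Localization.AtPrime A _ I' h2) := by
    rintro I I' rfl h1 h2
    rfl
  have hmain : (LinearMap.mulLeft ℂ f).charpoly =
      (∏ᶠ φ : A →ₐ[ℂ] ℂ,
        haveI : (RingHom.ker φ).IsPrime := RingHom.ker_isPrime φ
        (X - C (φ f)) ^ Module.finrank ℂ (Localization.AtPrime (RingHom.ker φ))) := by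
    rw [finprod_eq_prod_of_fintype, hchar]
    refine Fintype.prod_bijective ψ hψbij _ _ fun j => ?_
    congr 1
    exact ((hfr _ _ (hψ j) (RingHom.ker_isPrime (ψ j)) ((hJmax j).isPrime)).trans
      (hloc j ((hJmax j).isPrime))).symm
  refine ⟨hmain, ?_⟩
  intro μ
  constructor
  · intro hev
    have hroot : ((LinearMap.mulLeft ℂ f).charpoly).IsRoot μ := by
      obtain ⟨q, hq⟩ := LinearMap.minpoly_dvd_charpoly (LinearMap.mulLeft ℂ f)
      have h1 : (minpoly ℂ (LinearMap.mulLeft ℂ f)).IsRoot μ :=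
        Module.End.hasEigenvalue_iff_isRoot.mp hev
      show eval μ ((LinearMap.mulLeft ℂ f).charpoly) = 0
      rw [hq, eval_mul, h1.eq_zero, zero_mul]
    rw [hchar] at hroot
    have h2 : ∏ j, (μ - ψ j f) ^ m j = 0 := by
      have := hroot.eq_zero
      simpa [eval_prod] using this
    obtain ⟨j, -, hj⟩ := Finset.prod_eq_zero_iff.mp h2
    have h3 : μ - ψ j f = 0 :=
      pow_eq_zero_iff (Nat.one_le_iff_ne_zero.mp (hm1 j)) |>.mp hj
    exact ⟨ψ j, (sub_eq_zero.mp h3).symm⟩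
  · rintro ⟨φ, rfl⟩
    set g := f - algebraMap ℂ A (φ f) with hg
    have hgker : φ g = 0 := by simp [hg, map_sub, AlgHom.commutes]
    have hnotinj : ¬ Function.Injective (LinearMap.mulLeft ℂ g) := by
      intro hinj
      have hsurj := (LinearMap.injective_iff_surjective).mp hinj
      obtain ⟨h, hh⟩ := hsurj 1
      have h1 : φ g * φ h = 1 := by
        rw [← map_mul]
        have : g * h = 1 := hh
        rw [this, map_one]
      rw [hgker, zero_mul] at h1
      exact zero_ne_one h1
    obtain ⟨x, hx0, hgx⟩ : ∃ x : A, x ≠ 0 ∧ g * x = 0 := by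
      rw [Function.not_injective_iff] at hnotinj
      obtain ⟨a, b, hab, hne⟩ := hnotinj
      refine ⟨a - b, sub_ne_zero.mpr hne, ?_⟩
      have : g * a = g * b := hab
      rw [mul_sub, this, sub_self]
    refine Module.End.hasEigenvalue_iff.mpr ?_
    intro heig
    have hmem : x ∈ Module.End.eigenspace (LinearMap.mulLeft ℂ f : Module.End ℂ A) (φ f) := by
      rw [Module.End.mem_eigenspace_iff]
      show f * x = φ f • x
      have h1 : φ f • x = algebraMap ℂ A (φ f) * x := Algebra.smul_def _ _
      rw [h1]
      have h2 : (f - algebraMap ℂ A (φ f)) * x = 0 := hgx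
      rw [sub_mul] at h2
      exact sub_eq_zero.mp h2
    rw [heig] at hmem
    exact hx0 ((Submodule.mem_bot ℂ).mp hmem)
end
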